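/- arXiv:1508.04214 — 6 statements merged into one kernel-verified Lean document; each statement's English description precedes it below -/
import Mathlib

section
/- Let A be an n×n Hermitian matrix with eigenvalues λ₁ ≥ λ₂ ≥ ... ≥ λ_n and orthonormal eigenvectors s₁, ..., s_n. Let V be an n×m matrix with orthonormal columns (m ≥ J) whose column span contains s₁, ..., s_J. Then λ_J(V* A V) = λ_J(A). -/
open Matrix

/-- The `J`-th largest eigenvalue (0-indexed, counting multiplicity) of a Hermitian matrix. -/
noncomputable def eigLarge {n : ℕ} {A : Matrix (Fin n) (Fin n) ℂ} (hA : A.IsHermitian)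
    (J : Fin n) : ℝ :=
  (hA.eigenvalues ∘ Tuple.sort hA.eigenvalues) J.rev

/-- The spectral (operator 2-) norm of a square complex matrix. -/
noncomputable def specNorm {n : ℕ} (A : Matrix (Fin n) (Fin n) ℂ) : ℝ :=
  ‖Matrix.toEuclideanCLM (𝕜 := ℂ) A‖

/-- The `J`-th largest singular value (0-indexed) of a rectangular complex matrix. -/
noncomputable def svalLarge {p q : ℕ} (B : Matrix (Fin p) (Fin q) ℂ) (J : Fin q) : ℝ :=
  Real.sqrt (eigLarge (Matrix.isHermitian_conjTranspose_mul_self B) J)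

namespace Stmt3Aux

open Finset

lemma exists_comb_vanish {k p : ℕ} (W : Fin k → Fin p → ℂ) (S : Finset (Fin p))
    (hS : S.card < k) :
    ∃ a : Fin k → ℂ, a ≠ 0 ∧ ∀ i ∈ S, (∑ j, a j • W j) i = 0 := by
  let φ : (Fin k → ℂ) →ₗ[ℂ] (S → ℂ) :=
    { toFun := fun a => fun i => (∑ j, a j • W j) i.1
      map_add' := by
        intro a b; funext i
        simp [add_smul, Finset.sum_add_distrib]
      map_smul' := by
        intro c a; funext i
        simp [smul_smul, Finset.mul_sum, mul_assoc] }
  have hni : ¬ Function.Injective φ := by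
    intro h
    have := LinearMap.finrank_le_finrank_of_injective h
    simp [Module.finrank_pi] at this
    omega
  rw [← LinearMap.ker_eq_bot, Submodule.eq_bot_iff] at hni
  push_neg at hni
  obtain ⟨a, ha, hne⟩ := hni
  refine ⟨a, hne, fun i hi => ?_⟩
  have := congrFun (LinearMap.mem_ker.mp ha) ⟨i, hi⟩
  simpa [φ] using this
lemma card_filter_perm {p : ℕ} (f : Fin p → ℝ) (P : ℝ → Prop) [DecidablePred P]
    (σ : Equiv.Perm (Fin p)) :
    (univ.filter fun i => P (f (σ i))).card = (univ.filter fun i => P (f i)).card := by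
  apply Finset.card_bij (fun i _ => σ i)
  · intro i hi; simpa using (mem_filter.mp hi).2
  · intro i _ j _ h; exact σ.injective h
  · intro j hj
    exact ⟨σ.symm j, by simpa using (mem_filter.mp hj).2, by simp⟩

lemma eigLarge_anti {p : ℕ} {M : Matrix (Fin p) (Fin p) ℂ} (hM : M.IsHermitian)
    {i j : Fin p} (h : i ≤ j) : eigLarge hM j ≤ eigLarge hM i :=
  Tuple.monotone_sort hM.eigenvalues (Fin.rev_le_rev.mpr h)

lemma bridge1 {p J : ℕ} {M : Matrix (Fin p) (Fin p) ℂ} (hM : M.IsHermitian) (hJ : J < p)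
    {r : ℝ} (h : J + 1 ≤ (univ.filter fun i => r ≤ hM.eigenvalues i).card) :
    r ≤ eigLarge hM ⟨J, hJ⟩ := by
  by_contra hlt
  push_neg at hlt
  set σ := Tuple.sort hM.eigenvalues with hσ
  rw [← card_filter_perm hM.eigenvalues (fun x => r ≤ x) σ] at h
  have hsub : (univ.filter fun i => r ≤ hM.eigenvalues (σ i)) ⊆ Finset.Ioi (Fin.rev ⟨J, hJ⟩) := by
    intro i hi
    rw [Finset.mem_Ioi]
    by_contra hle
    push_neg at hle
    have h2 : hM.eigenvalues (σ i) ≤ hM.eigenvalues (σ (Fin.rev ⟨J, hJ⟩)) :=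
      Tuple.monotone_sort hM.eigenvalues hle
    have h3 : r ≤ hM.eigenvalues (σ i) := (mem_filter.mp hi).2
    have h4 : hM.eigenvalues (σ (Fin.rev ⟨J, hJ⟩)) = eigLarge hM ⟨J, hJ⟩ := rfl
    exact absurd (h3.trans_lt (h2.trans_lt (h4 ▸ hlt))) (lt_irrefl r)
  have hc := (Finset.card_le_card hsub).trans_eq (Fin.card_Ioi _)
  rw [Fin.val_rev] at hc
  simp only at hc h
  omega

lemma bridge2 {p J : ℕ} {M : Matrix (Fin p) (Fin p) ℂ} (hM : M.IsHermitian) (hJ : J < p) :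
    (univ.filter fun i => eigLarge hM ⟨J, hJ⟩ < hM.eigenvalues i).card ≤ J := by
  set σ := Tuple.sort hM.eigenvalues with hσ
  set r := eigLarge hM ⟨J, hJ⟩ with hr
  rw [← card_filter_perm hM.eigenvalues (fun x => r < x) σ]
  have hsub : (univ.filter fun i => r < hM.eigenvalues (σ i)) ⊆ Finset.Ioi (Fin.rev ⟨J, hJ⟩) := by
    intro i hi
    rw [Finset.mem_Ioi]
    by_contra hle
    push_neg at hle
    have h2 : hM.eigenvalues (σ i) ≤ hM.eigenvalues (σ (Fin.rev ⟨J, hJ⟩)) :=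
      Tuple.monotone_sort hM.eigenvalues hle
    have h3 : r < hM.eigenvalues (σ i) := (mem_filter.mp hi).2
    have h4 : hM.eigenvalues (σ (Fin.rev ⟨J, hJ⟩)) = r := rfl
    exact absurd (h3.trans_le (h4 ▸ h2)) (lt_irrefl r)
  have hc := (Finset.card_le_card hsub).trans_eq (Fin.card_Ioi _)
  rw [Fin.val_rev] at hc
  simp only at hc
  omega
variable {p : ℕ} {M : Matrix (Fin p) (Fin p) ℂ}

lemma quad_form_eq (hM : M.IsHermitian) (y : Fin p → ℂ) :
    (star ((hM.eigenvectorUnitary : Matrix (Fin p) (Fin p) ℂ) *ᵥ y) ⬝ᵥ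
        (M *ᵥ ((hM.eigenvectorUnitary : Matrix (Fin p) (Fin p) ℂ) *ᵥ y))).re
      = ∑ i, hM.eigenvalues i * Complex.normSq (y i) ∧
    (star ((hM.eigenvectorUnitary : Matrix (Fin p) (Fin p) ℂ) *ᵥ y) ⬝ᵥ
        ((hM.eigenvectorUnitary : Matrix (Fin p) (Fin p) ℂ) *ᵥ y)).re
      = ∑ i, Complex.normSq (y i) := by
  set U : Matrix (Fin p) (Fin p) ℂ := (hM.eigenvectorUnitary : Matrix (Fin p) (Fin p) ℂ) with hU
  have hsU : star U * U = 1 := Unitary.coe_star_mul_self hM.eigenvectorUnitary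
  set x := U *ᵥ y with hx
  have hstar : star x = star y ᵥ* star U := by
    rw [hx, star_mulVec, Matrix.star_eq_conjTranspose]
  have key : ∀ w : Fin p → ℂ, star x ⬝ᵥ (U *ᵥ w) = star y ⬝ᵥ w := by
    intro w
    rw [hstar, dotProduct_mulVec, vecMul_vecMul, hsU, vecMul_one]
  constructor
  · have hMx : M *ᵥ x = U *ᵥ ((diagonal (RCLike.ofReal ∘ hM.eigenvalues)) *ᵥ y) := by
      conv_lhs => rw [hM.spectral_theorem, Unitary.conjStarAlgAut_apply]
      rw [← hU, hx]
      simp only [mulVec_mulVec, Matrix.mul_assoc, hsU, Matrix.mul_one]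
    have hsum : star y ⬝ᵥ ((diagonal (RCLike.ofReal ∘ hM.eigenvalues)) *ᵥ y)
        = ((∑ i, hM.eigenvalues i * Complex.normSq (y i) : ℝ) : ℂ) := by
      simp only [dotProduct, mulVec_diagonal, Pi.star_apply, Function.comp_apply,
        Complex.ofReal_sum, RCLike.star_def]
      apply Finset.sum_congr rfl
      intro i _
      rw [show (RCLike.ofReal (hM.eigenvalues i) : ℂ) = ((hM.eigenvalues i : ℝ) : ℂ) from rfl]
      push_cast
      rw [Complex.normSq_eq_conj_mul_self]
      ring
    rw [hMx, key, hsum, Complex.ofReal_re]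
  · have h2 : star x ⬝ᵥ x = star y ⬝ᵥ y := by rw [hx]; exact key y
    have hsum : star y ⬝ᵥ y = ((∑ i, Complex.normSq (y i) : ℝ) : ℂ) := by
      simp only [dotProduct, Pi.star_apply, Complex.ofReal_sum, RCLike.star_def]
      apply Finset.sum_congr rfl
      intro i _
      rw [Complex.normSq_eq_conj_mul_self]
    rw [h2, hsum, Complex.ofReal_re]

section count
variable {p k : ℕ} {M : Matrix (Fin p) (Fin p) ℂ}

/-- common setup -/
lemma count_core (hM : M.IsHermitian) (W : Fin k → Fin p → ℂ)
    (hW : LinearIndependent ℂ W) (S : Finset (Fin p)) (hS : S.card < k) :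
    ∃ a : Fin k → ℂ, a ≠ 0 ∧
      ((∃ y : Fin p → ℂ, (∀ i ∈ S, y i = 0) ∧ y ≠ 0 ∧
        (star (∑ j, a j • W j) ⬝ᵥ (M *ᵥ (∑ j, a j • W j))).re
          = ∑ i, hM.eigenvalues i * Complex.normSq (y i) ∧
        (star (∑ j, a j • W j) ⬝ᵥ (∑ j, a j • W j)).re = ∑ i, Complex.normSq (y i))) := by
  set U : Matrix (Fin p) (Fin p) ℂ := (hM.eigenvectorUnitary : Matrix (Fin p) (Fin p) ℂ) with hU
  have hsU : star U * U = 1 := Unitary.coe_star_mul_self hM.eigenvectorUnitary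
  have hUs : U * star U = 1 := Unitary.coe_mul_star_self hM.eigenvectorUnitary
  set W' : Fin k → Fin p → ℂ := fun j => star U *ᵥ W j with hW'
  have hWlin : LinearIndependent ℂ W' := by
    have hinj : Function.Injective (Matrix.mulVecLin (star U)) := by
      intro u v huv
      have := congrArg (fun z => U *ᵥ z) huv
      simpa [mulVec_mulVec, hUs] using this
    exact hW.map' (Matrix.mulVecLin (star U)) (LinearMap.ker_eq_bot.mpr hinj)
  obtain ⟨a, ha0, hvan⟩ := exists_comb_vanish W' S hS
  set y : Fin p → ℂ := ∑ j, a j • W' j with hy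
  have hyne : y ≠ 0 := by
    intro h0
    exact ha0 (funext fun j => (Fintype.linearIndependent_iff.mp hWlin a (h0 ▸ rfl)) j)
  have hxy : ∑ j, a j • W j = U *ᵥ y := by
    have h1 : y = star U *ᵥ (∑ j, a j • W j) := by
      rw [hy, hW', show star U *ᵥ (∑ j, a j • W j)
          = (Matrix.mulVecLin (star U)) (∑ j, a j • W j) from rfl, map_sum]
      simp only [_root_.map_smul, Matrix.mulVecLin_apply, Matrix.mulVec_smul]
    rw [h1, mulVec_mulVec, hUs, one_mulVec]
  obtain ⟨hq1, hq2⟩ := quad_form_eq hM y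
  exact ⟨a, ha0, y, hvan, hyne, by rw [hxy]; exact hq1, by rw [hxy]; exact hq2⟩

end count

section count2
variable {p k : ℕ} {M : Matrix (Fin p) (Fin p) ℂ}

lemma count_ge (hM : M.IsHermitian) (r : ℝ) (W : Fin k → Fin p → ℂ)
    (hW : LinearIndependent ℂ W)
    (hray : ∀ a : Fin k → ℂ, a ≠ 0 →
      r * (star (∑ j, a j • W j) ⬝ᵥ (∑ j, a j • W j)).re
        ≤ (star (∑ j, a j • W j) ⬝ᵥ (M *ᵥ (∑ j, a j • W j))).re) :
    k ≤ (univ.filter fun i => r ≤ hM.eigenvalues i).card := by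
  by_contra hcard
  push_neg at hcard
  obtain ⟨a, ha0, y, hvan, hyne, hq1, hq2⟩ :=
    count_core hM W hW (univ.filter fun i => r ≤ hM.eigenvalues i) hcard
  have hray' := hray a ha0
  rw [hq1, hq2] at hray'
  obtain ⟨i₀, hi₀⟩ : ∃ i, y i ≠ 0 := by
    by_contra h; push_neg at h; exact hyne (funext h)
  have hi₀S : ¬ r ≤ hM.eigenvalues i₀ := by
    intro h
    exact hi₀ (hvan i₀ (mem_filter.mpr ⟨mem_univ _, h⟩))
  have hlt : ∑ i, hM.eigenvalues i * Complex.normSq (y i)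
      < ∑ i, r * Complex.normSq (y i) := by
    apply Finset.sum_lt_sum
    · intro i _
      by_cases hiS : r ≤ hM.eigenvalues i
      · by_cases hyi : y i = 0
        · simp [hyi]
        · exact absurd (hvan i (mem_filter.mpr ⟨mem_univ _, hiS⟩)) hyi
      · exact mul_le_mul_of_nonneg_right (le_of_lt (not_le.mp hiS)) (Complex.normSq_nonneg _)
    · exact ⟨i₀, mem_univ _, mul_lt_mul_of_pos_right (not_le.mp hi₀S)
        (Complex.normSq_pos.mpr hi₀)⟩
  rw [← Finset.mul_sum] at hlt
  linarith

lemma count_gt (hM : M.IsHermitian) (r : ℝ) (W : Fin k → Fin p → ℂ)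
    (hW : LinearIndependent ℂ W)
    (hray : ∀ a : Fin k → ℂ, a ≠ 0 →
      r * (star (∑ j, a j • W j) ⬝ᵥ (∑ j, a j • W j)).re
        < (star (∑ j, a j • W j) ⬝ᵥ (M *ᵥ (∑ j, a j • W j))).re) :
    k ≤ (univ.filter fun i => r < hM.eigenvalues i).card := by
  by_contra hcard
  push_neg at hcard
  obtain ⟨a, ha0, y, hvan, hyne, hq1, hq2⟩ :=
    count_core hM W hW (univ.filter fun i => r < hM.eigenvalues i) hcard
  have hray' := hray a ha0
  rw [hq1, hq2] at hray'
  have hle : ∑ i, hM.eigenvalues i * Complex.normSq (y i)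
      ≤ ∑ i, r * Complex.normSq (y i) := by
    apply Finset.sum_le_sum
    intro i _
    by_cases hiS : r < hM.eigenvalues i
    · by_cases hyi : y i = 0
      · simp [hyi]
      · exact absurd (hvan i (mem_filter.mpr ⟨mem_univ _, hiS⟩)) hyi
    · exact mul_le_mul_of_nonneg_right (not_lt.mp hiS) (Complex.normSq_nonneg _)
  rw [← Finset.mul_sum] at hle
  linarith

end count2
lemma sum_dotP {k p : ℕ} (v : Fin k → Fin p → ℂ) (w : Fin p → ℂ) :
    (∑ i, v i) ⬝ᵥ w = ∑ i, v i ⬝ᵥ w := by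
  simp only [dotProduct, Finset.sum_apply, Finset.sum_mul]
  exact Finset.sum_comm

lemma dotP_sum {k p : ℕ} (w : Fin p → ℂ) (v : Fin k → Fin p → ℂ) :
    w ⬝ᵥ (∑ i, v i) = ∑ i, w ⬝ᵥ v i := by
  simp only [dotProduct, Finset.sum_apply, Finset.mul_sum]
  exact Finset.sum_comm

lemma dot_comb_left {k p : ℕ} (W : Fin k → Fin p → ℂ)
    (h : ∀ i j, star (W i) ⬝ᵥ W j = if i = j then 1 else 0) (a : Fin k → ℂ) (j : Fin k) :
    star (∑ i, a i • W i) ⬝ᵥ W j = (starRingEnd ℂ) (a j) := by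
  rw [star_sum, sum_dotP]
  have : ∀ i, star (a i • W i) ⬝ᵥ W j = (starRingEnd ℂ) (a i) * (if i = j then 1 else 0) := by
    intro i
    rw [star_smul, smul_dotProduct, h i j]
    simp [smul_eq_mul]
  rw [Finset.sum_congr rfl fun i _ => this i]
  simp

lemma lin_indep_of_orth {k p : ℕ} (W : Fin k → Fin p → ℂ)
    (h : ∀ i j, star (W i) ⬝ᵥ W j = if i = j then 1 else 0) : LinearIndependent ℂ W := by
  rw [Fintype.linearIndependent_iff]
  intro g hg i
  have h2 := congrArg (fun v => star (W i) ⬝ᵥ v) hg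
  simp only [dotProduct_zero] at h2
  rw [dotP_sum] at h2
  simp only [dotProduct_smul, h, smul_eq_mul] at h2
  simpa [Finset.sum_ite_eq'] using h2

lemma comb_expand {k p : ℕ} (M : Matrix (Fin p) (Fin p) ℂ) (W : Fin k → Fin p → ℂ)
    (ν : Fin k → ℝ)
    (horth : ∀ i j, star (W i) ⬝ᵥ W j = if i = j then 1 else 0)
    (heig : ∀ i, M *ᵥ W i = (ν i : ℂ) • W i) (a : Fin k → ℂ) :
    (star (∑ j, a j • W j) ⬝ᵥ (M *ᵥ (∑ j, a j • W j))).re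
        = ∑ j, ν j * Complex.normSq (a j) ∧
    (star (∑ j, a j • W j) ⬝ᵥ (∑ j, a j • W j)).re = ∑ j, Complex.normSq (a j) := by
  have hMx : M *ᵥ (∑ j, a j • W j) = ∑ j, (a j * (ν j : ℂ)) • W j := by
    rw [show M *ᵥ (∑ j, a j • W j) = M.mulVecLin (∑ j, a j • W j) from rfl, map_sum]
    apply Finset.sum_congr rfl
    intro j _
    rw [_root_.map_smul, Matrix.mulVecLin_apply, heig j, smul_smul, mul_comm]
  constructor
  · rw [hMx, dotP_sum]
    have : ∀ j, star (∑ i, a i • W i) ⬝ᵥ ((a j * (ν j : ℂ)) • W j)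
        = (((ν j * Complex.normSq (a j) : ℝ)) : ℂ) := by
      intro j
      rw [dotProduct_smul _ _ _, dot_comb_left W horth, smul_eq_mul]
      push_cast
      rw [Complex.normSq_eq_conj_mul_self]
      ring
    rw [Finset.sum_congr rfl fun j _ => this j, ← Complex.ofReal_sum, Complex.ofReal_re]
  · rw [dotP_sum]
    have : ∀ j, star (∑ i, a i • W i) ⬝ᵥ (a j • W j) = (((Complex.normSq (a j) : ℝ)) : ℂ) := by
      intro j
      rw [dotProduct_smul _ _ _, dot_comb_left W horth, smul_eq_mul,
        Complex.normSq_eq_conj_mul_self]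
      ring
    rw [Finset.sum_congr rfl fun j _ => this j, ← Complex.ofReal_sum, Complex.ofReal_re]

end Stmt3Aux

open Finset Stmt3Aux in
/-- interpolatory property: if the column span of `V` contains orthonormal
eigenvectors for the `J+1` largest eigenvalues of `A`, then `λ_J(Vᴴ A V) = λ_J(A)`
(0-indexed `J`). -/
theorem stmt3 (n m J : ℕ) (hJm : J < m) (hJn : J < n)
    (A : Matrix (Fin n) (Fin n) ℂ) (hA : A.IsHermitian)
    (s : Fin n → (Fin n → ℂ))
    (hortho : ∀ i j, star (s i) ⬝ᵥ s j = if i = j then 1 else 0)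
    (heig : ∀ i, A *ᵥ s i = (eigLarge hA i : ℂ) • s i)
    (V : Matrix (Fin n) (Fin m) ℂ) (hV : Vᴴ * V = 1)
    (hspan : ∀ i : Fin n, (i : ℕ) ≤ J → ∃ c : Fin m → ℂ, s i = V *ᵥ c)
    (hC : (Vᴴ * A * V).IsHermitian) :
    eigLarge hC ⟨J, hJm⟩ = eigLarge hA ⟨J, hJn⟩ := by
  set r := eigLarge hA ⟨J, hJn⟩ with hr
  -- dot products through V are preserved
  have hVdot : ∀ (u v : Fin m → ℂ), star (V *ᵥ u) ⬝ᵥ (V *ᵥ v) = star u ⬝ᵥ v := by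
    intro u v
    rw [star_mulVec, dotProduct_mulVec, vecMul_vecMul, hV, vecMul_one]
  -- quadratic form through V
  have hVquad : ∀ z : Fin m → ℂ,
      star (V *ᵥ z) ⬝ᵥ (A *ᵥ (V *ᵥ z)) = star z ⬝ᵥ ((Vᴴ * A * V) *ᵥ z) := by
    intro z
    rw [star_mulVec, dotProduct_mulVec, vecMul_vecMul, dotProduct_mulVec, vecMul_vecMul,
      dotProduct_mulVec]
  -- Part (a): r ≤ eigLarge hC ⟨J, hJm⟩
  have part_a : r ≤ eigLarge hC ⟨J, hJm⟩ := by
    set en : Fin (J + 1) → Fin n :=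
      fun i => ⟨i.1, lt_of_le_of_lt (Nat.lt_succ_iff.mp i.2) hJn⟩ with hen
    choose c hcs using fun i : Fin (J + 1) => hspan (en i) (Nat.lt_succ_iff.mp i.2)
    have horthc : ∀ i j, star (c i) ⬝ᵥ c j = if i = j then 1 else 0 := by
      intro i j
      rw [← hVdot (c i) (c j), ← hcs i, ← hcs j, hortho]
      have : en i = en j ↔ i = j := by
        constructor
        · intro h
          have hv : (en i).val = (en j).val := congrArg Fin.val h
          exact Fin.ext hv
        · intro h; exact congrArg en h
      simp only [this]
    have heigc : ∀ i, (Vᴴ * A * V) *ᵥ c i = ((eigLarge hA (en i) : ℝ) : ℂ) • c i := by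
      intro i
      have h1 : (Vᴴ * A * V) *ᵥ c i = Vᴴ *ᵥ (A *ᵥ (V *ᵥ c i)) := by
        rw [← mulVec_mulVec, ← mulVec_mulVec]
      rw [h1, ← hcs i, heig (en i), mulVec_smul, hcs i, mulVec_mulVec, hV, one_mulVec]
    apply bridge1 hC hJm
    apply count_ge hC r c (lin_indep_of_orth c horthc)
    intro a ha0
    obtain ⟨e1, e2⟩ := comb_expand (Vᴴ * A * V) c (fun i => eigLarge hA (en i)) horthc heigc a
    rw [e1, e2, Finset.mul_sum]
    apply Finset.sum_le_sum
    intro i _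
    refine mul_le_mul_of_nonneg_right ?_ (Complex.normSq_nonneg _)
    exact eigLarge_anti hA (show en i ≤ ⟨J, hJn⟩ from Nat.lt_succ_iff.mp i.2)
  -- Part (b): ¬ r < eigLarge hC ⟨J, hJm⟩
  have part_b : ¬ r < eigLarge hC ⟨J, hJm⟩ := by
    intro hlt
    set σ := Tuple.sort hC.eigenvalues with hσ
    set em : Fin (J + 1) → Fin m :=
      fun i => ⟨i.1, lt_of_le_of_lt (Nat.lt_succ_iff.mp i.2) hJm⟩ with hem
    set t : Fin (J + 1) → Fin m → ℂ :=
      fun i => (WithLp.equiv 2 _) (hC.eigenvectorBasis (σ ((em i).rev))) with ht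
    have hidx : Function.Injective (fun i : Fin (J + 1) => σ ((em i).rev)) := by
      intro i j h
      have h2 := Fin.rev_injective (σ.injective h)
      have hv : (em i).val = (em j).val := congrArg Fin.val h2
      exact Fin.ext hv
    have hortht : ∀ i j, star (t i) ⬝ᵥ t j = if i = j then 1 else 0 := by
      intro i j
      have := orthonormal_iff_ite.mp hC.eigenvectorBasis.orthonormal
        (σ ((em i).rev)) (σ ((em j).rev))
      rw [EuclideanSpace.inner_eq_star_dotProduct] at this
      rw [ht]
      refine (dotProduct_comm _ _).trans (this.trans ?_)
      have hiff : σ ((em i).rev) = σ ((em j).rev) ↔ i = j :=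
        ⟨fun h => hidx h, fun h => by rw [h]⟩
      simp only [hiff]
    have heigt : ∀ i, (Vᴴ * A * V) *ᵥ t i = ((eigLarge hC (em i) : ℝ) : ℂ) • t i := by
      intro i
      have h1 := hC.mulVec_eigenvectorBasis (σ ((em i).rev))
      have h2 : eigLarge hC (em i) = hC.eigenvalues (σ ((em i).rev)) := rfl
      rw [ht, h2]
      exact h1.trans (RCLike.real_smul_eq_coe_smul (K := ℂ) _ _)
    set W : Fin (J + 1) → Fin n → ℂ := fun i => V *ᵥ t i with hW
    have horthW : ∀ i j, star (W i) ⬝ᵥ W j = if i = j then 1 else 0 := by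
      intro i j
      rw [hW]
      rw [hVdot]
      exact hortht i j
    have hcount := count_gt hA r W (lin_indep_of_orth W horthW) ?_
    · have := bridge2 hA hJn
      rw [← hr] at this
      omega
    · intro a ha0
      have hxz : ∑ j, a j • W j = V *ᵥ (∑ j, a j • t j) := by
        rw [show V *ᵥ (∑ j, a j • t j) = V.mulVecLin (∑ j, a j • t j) from rfl, map_sum]
        apply Finset.sum_congr rfl
        intro j _
        rw [_root_.map_smul, Matrix.mulVecLin_apply]
      obtain ⟨e1, e2⟩ :=
        comb_expand (Vᴴ * A * V) t (fun i => eigLarge hC (em i)) hortht heigt a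
      rw [hxz, hVquad, hVdot, e1, e2, Finset.mul_sum]
      obtain ⟨j₀, hj₀⟩ : ∃ j, a j ≠ 0 := by
        by_contra h; push_neg at h; exact ha0 (funext h)
      apply Finset.sum_lt_sum
      · intro i _
        refine mul_le_mul_of_nonneg_right (le_of_lt ?_) (Complex.normSq_nonneg _)
        exact lt_of_lt_of_le hlt
          (eigLarge_anti hC (show em i ≤ ⟨J, hJm⟩ from Nat.lt_succ_iff.mp i.2))
      · refine ⟨j₀, Finset.mem_univ _, ?_⟩
        refine mul_lt_mul_of_pos_right ?_ (Complex.normSq_pos.mpr hj₀)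
        exact lt_of_lt_of_le hlt
          (eigLarge_anti hC (show em j₀ ≤ ⟨J, hJm⟩ from Nat.lt_succ_iff.mp j₀.2))
  exact le_antisymm (not_lt.mp part_b) part_a
end

section
/- Let A : Ω → Hermitian n×n matrices be a parameter-dependent Hermitian matrix family on a set Ω ⊆ ℝ^d. Suppose ω* ∈ Ω maximizes λ_J(A(ω)) over Ω, and let V be an n×m matrix with orthonormal columns whose column span contains the eigenvectors s₁, ..., s_J of A(ω*) corresponding to its J largest eigenvalues. Then max_{ω∈Ω} λ_J(V* A(ω) V) = max_{ω∈Ω} λ_J(A(ω)). -/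
open Matrix

section Aux

private lemma dot_sum_right {n : ℕ} {ι : Type*} (s : Finset ι) (v : Fin n → ℂ)
    (f : ι → Fin n → ℂ) : v ⬝ᵥ (∑ i ∈ s, f i) = ∑ i ∈ s, v ⬝ᵥ f i := by
  simp only [dotProduct, Finset.sum_apply, Finset.mul_sum]
  exact Finset.sum_comm

private lemma dot_sum_left {n : ℕ} {ι : Type*} (s : Finset ι) (v : Fin n → ℂ)
    (f : ι → Fin n → ℂ) : (∑ i ∈ s, f i) ⬝ᵥ v = ∑ i ∈ s, f i ⬝ᵥ v := by
  simp only [dotProduct, Finset.sum_apply, Finset.sum_mul]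
  exact Finset.sum_comm

private lemma mulVec_sum' {p q : ℕ} {ι : Type*} (s : Finset ι) (M : Matrix (Fin p) (Fin q) ℂ)
    (f : ι → Fin q → ℂ) : M *ᵥ (∑ i ∈ s, f i) = ∑ i ∈ s, M *ᵥ f i := by
  simpa only [Matrix.mulVecLin_apply] using map_sum (Matrix.mulVecLin M) f s

private lemma dot_expand {n k : ℕ} {w : Fin k → Fin n → ℂ}
    (horth : ∀ i j, star (w i) ⬝ᵥ w j = if i = j then 1 else 0) (c d : Fin k → ℂ) :
    star (∑ i, c i • w i) ⬝ᵥ (∑ i, d i • w i) = ∑ i, (starRingEnd ℂ) (c i) * d i := by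
  rw [star_sum, dot_sum_left]
  refine Finset.sum_congr rfl fun i _ => ?_
  rw [star_smul, smul_dotProduct, dot_sum_right]
  simp [dotProduct_smul, horth, mul_comm]

private lemma dot_single {n k : ℕ} {w : Fin k → Fin n → ℂ}
    (horth : ∀ i j, star (w i) ⬝ᵥ w j = if i = j then 1 else 0) (c : Fin k → ℂ) (j : Fin k) :
    star (w j) ⬝ᵥ (∑ i, c i • w i) = c j := by
  rw [dot_sum_right]
  simp [dotProduct_smul, horth]

private lemma norm_expand {n k : ℕ} {w : Fin k → Fin n → ℂ}
    (horth : ∀ i j, star (w i) ⬝ᵥ w j = if i = j then 1 else 0) (c : Fin k → ℂ) :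
    star (∑ i, c i • w i) ⬝ᵥ (∑ i, c i • w i) = ((∑ i, ‖c i‖ ^ 2 : ℝ) : ℂ) := by
  rw [dot_expand horth c c]
  push_cast
  exact Finset.sum_congr rfl fun i _ => by rw [Complex.conj_mul']

private lemma quad_expand {n k : ℕ} {M : Matrix (Fin n) (Fin n) ℂ} {w : Fin k → Fin n → ℂ}
    {μ : Fin k → ℝ}
    (horth : ∀ i j, star (w i) ⬝ᵥ w j = if i = j then 1 else 0)
    (heig : ∀ i, M *ᵥ w i = ((μ i : ℝ) : ℂ) • w i) (c : Fin k → ℂ) :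
    star (∑ i, c i • w i) ⬝ᵥ (M *ᵥ ∑ i, c i • w i) = ((∑ i, ‖c i‖ ^ 2 * μ i : ℝ) : ℂ) := by
  have h1 : M *ᵥ (∑ i, c i • w i) = ∑ i, (c i * (μ i : ℂ)) • w i := by
    rw [mulVec_sum']
    exact Finset.sum_congr rfl fun i _ => by rw [mulVec_smul, heig i, smul_smul]
  rw [h1, dot_expand horth]
  push_cast
  refine Finset.sum_congr rfl fun i _ => ?_
  rw [← mul_assoc, Complex.conj_mul']

private lemma isometry_dot {n m : ℕ} (V : Matrix (Fin n) (Fin m) ℂ) (hV : Vᴴ * V = 1)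
    (x y : Fin m → ℂ) : star (V *ᵥ x) ⬝ᵥ (V *ᵥ y) = star x ⬝ᵥ y := by
  rw [star_mulVec, ← dotProduct_mulVec, mulVec_mulVec, hV, one_mulVec]

private lemma compress_quad {n m : ℕ} (V : Matrix (Fin n) (Fin m) ℂ)
    (M : Matrix (Fin n) (Fin n) ℂ) (x : Fin m → ℂ) :
    star x ⬝ᵥ ((Vᴴ * M * V) *ᵥ x) = star (V *ᵥ x) ⬝ᵥ (M *ᵥ (V *ᵥ x)) := by
  conv_rhs => rw [star_mulVec, ← dotProduct_mulVec, mulVec_mulVec, mulVec_mulVec]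

private lemma linIndep_of_orth {n k : ℕ} {w : Fin k → Fin n → ℂ}
    (horth : ∀ i j, star (w i) ⬝ᵥ w j = if i = j then 1 else 0) :
    LinearIndependent ℂ w := by
  rw [Fintype.linearIndependent_iff]
  intro g hg i
  have h := dot_single horth g i
  rw [hg, dotProduct_zero] at h
  exact h.symm

private lemma eigLarge_eq {n : ℕ} {M : Matrix (Fin n) (Fin n) ℂ} (hM : M.IsHermitian)
    (J : Fin n) : eigLarge hM J = hM.eigenvalues (Tuple.sort hM.eigenvalues J.rev) := rfl

/-- Key lemma (one direction of Courant–Fischer): if there is a `(k+1)`-dimensional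
orthonormal family on whose span the Rayleigh quotient is at least `α`, then the `k`-th
largest eigenvalue is at least `α`. -/
private lemma eig_ge_of_family {n k : ℕ} (hk : k < n) {M : Matrix (Fin n) (Fin n) ℂ}
    (hM : M.IsHermitian) (α : ℝ) (w : Fin (k + 1) → (Fin n → ℂ))
    (horth : ∀ i j, star (w i) ⬝ᵥ w j = if i = j then 1 else 0)
    (hq : ∀ c : Fin (k + 1) → ℂ,
      (α * ∑ i, ‖c i‖ ^ 2 : ℝ) ≤ (star (∑ i, c i • w i) ⬝ᵥ (M *ᵥ ∑ i, c i • w i)).re) :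
    α ≤ eigLarge hM ⟨k, hk⟩ := by
  classical
  set σ := Tuple.sort hM.eigenvalues with hσdef
  -- low eigenvector family
  have hle : n - k ≤ n := Nat.sub_le n k
  set u : Fin (n - k) → (Fin n → ℂ) := fun i =>
    (WithLp.equiv 2 _) (hM.eigenvectorBasis (σ (Fin.castLE hle i))) with hudef
  have huorth : ∀ i j, star (u i) ⬝ᵥ u j = if i = j then 1 else 0 := by
    intro i j
    have hON := (orthonormal_iff_ite.mp hM.eigenvectorBasis.orthonormal)
      (σ (Fin.castLE hle i)) (σ (Fin.castLE hle j))
    rw [EuclideanSpace.inner_eq_star_dotProduct] at hON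
    rw [hudef]
    simp only at hON ⊢
    simp only [WithLp.equiv_apply]
    rw [dotProduct_comm, hON]
    congr 1
    simp [Fin.castLE, Fin.ext_iff]
  have hueig : ∀ i, M *ᵥ u i =
      ((hM.eigenvalues (σ (Fin.castLE hle i)) : ℝ) : ℂ) • u i := by
    intro i
    have := hM.mulVec_eigenvectorBasis (σ (Fin.castLE hle i))
    rw [hudef]
    simp only [WithLp.equiv_apply]
    rw [this]
    ext t
    simp [Complex.real_smul]
  -- subspaces
  set S : Submodule ℂ (Fin n → ℂ) := Submodule.span ℂ (Set.range w) with hSdef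
  set T : Submodule ℂ (Fin n → ℂ) := Submodule.span ℂ (Set.range u) with hTdef
  have hS : Module.finrank ℂ S = k + 1 := by
    rw [hSdef, finrank_span_eq_card (linIndep_of_orth horth)]; simp
  have hT : Module.finrank ℂ T = n - k := by
    rw [hTdef, finrank_span_eq_card (linIndep_of_orth huorth)]; simp
  have hsum := Submodule.finrank_sup_add_finrank_inf_eq S T
  have hsup : Module.finrank ℂ ↥(S ⊔ T) ≤ n :=
    le_trans (Submodule.finrank_le _) (le_of_eq (Module.finrank_fin_fun ℂ))
  have hpos : 0 < Module.finrank ℂ ↥(S ⊓ T) := by omega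
  rw [Module.finrank_pos_iff] at hpos
  obtain ⟨y, hy⟩ := exists_ne (0 : ↥(S ⊓ T))
  have hxmem : (y : Fin n → ℂ) ∈ S ⊓ T := y.2
  have hxne : (y : Fin n → ℂ) ≠ 0 := fun h => hy (Submodule.coe_eq_zero.mp h)
  obtain ⟨c, hc⟩ := (Submodule.mem_span_range_iff_exists_fun ℂ).mp hxmem.1
  obtain ⟨d, hd⟩ := (Submodule.mem_span_range_iff_exists_fun ℂ).mp hxmem.2
  -- norms agree
  have hnc : star (y : Fin n → ℂ) ⬝ᵥ (y : Fin n → ℂ) = ((∑ i, ‖c i‖ ^ 2 : ℝ) : ℂ) := by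
    rw [← hc]; exact norm_expand horth c
  have hnd : star (y : Fin n → ℂ) ⬝ᵥ (y : Fin n → ℂ) = ((∑ i, ‖d i‖ ^ 2 : ℝ) : ℂ) := by
    rw [← hd]; exact norm_expand huorth d
  have hN : (∑ i, ‖c i‖ ^ 2 : ℝ) = (∑ i, ‖d i‖ ^ 2 : ℝ) :=
    Complex.ofReal_inj.mp (hnc.symm.trans hnd)
  have hNpos : 0 < (∑ i, ‖c i‖ ^ 2 : ℝ) := by
    rcases (lt_or_eq_of_le (Finset.sum_nonneg fun i _ => sq_nonneg ‖c i‖) :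
        (0:ℝ) < _ ∨ _) with h | h
    · exact h
    · exfalso
      apply hxne
      rw [← hc]
      have hz := (Finset.sum_eq_zero_iff_of_nonneg
        (fun i _ => sq_nonneg ‖c i‖)).mp h.symm
      refine Finset.sum_eq_zero fun i _ => ?_
      have : ‖c i‖ = 0 := by
        have := hz i (Finset.mem_univ i)
        nlinarith [norm_nonneg (c i)]
      simp [norm_eq_zero.mp this]
  -- quadratic form value via d
  have hquad : star (y : Fin n → ℂ) ⬝ᵥ (M *ᵥ (y : Fin n → ℂ)) =
      ((∑ i, ‖d i‖ ^ 2 * hM.eigenvalues (σ (Fin.castLE hle i)) : ℝ) : ℂ) := by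
    rw [← hd]; exact quad_expand huorth hueig d
  have hlow : ∀ i : Fin (n - k), hM.eigenvalues (σ (Fin.castLE hle i)) ≤ eigLarge hM ⟨k, hk⟩ := by
    intro i
    rw [eigLarge_eq]
    refine Tuple.monotone_sort hM.eigenvalues ?_
    rw [Fin.le_def, Fin.val_rev]
    simp only [Fin.castLE]
    omega
  have hub : (∑ i, ‖d i‖ ^ 2 * hM.eigenvalues (σ (Fin.castLE hle i)) : ℝ) ≤
      eigLarge hM ⟨k, hk⟩ * (∑ i, ‖d i‖ ^ 2 : ℝ) := by
    rw [Finset.mul_sum]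
    refine Finset.sum_le_sum fun i _ => ?_
    rw [mul_comm (eigLarge hM ⟨k, hk⟩)]
    exact mul_le_mul_of_nonneg_left (hlow i) (sq_nonneg _)
  have hlb := hq c
  rw [hc, hquad] at hlb
  rw [Complex.ofReal_re] at hlb
  rw [hN] at hlb
  have hNpos' : 0 < (∑ i, ‖d i‖ ^ 2 : ℝ) := hN ▸ hNpos
  have hfin : α * (∑ i, ‖d i‖ ^ 2 : ℝ) ≤ eigLarge hM ⟨k, hk⟩ * (∑ i, ‖d i‖ ^ 2 : ℝ) :=
    le_trans hlb hub
  exact le_of_mul_le_mul_right (by simpa [mul_comm] using hfin) hNpos'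

/-- There is an orthonormal family of eigenvectors for the `k+1` largest eigenvalues. -/
private lemma exists_top {n k : ℕ} (hk : k < n) {M : Matrix (Fin n) (Fin n) ℂ}
    (hM : M.IsHermitian) :
    ∃ (w : Fin (k + 1) → (Fin n → ℂ)) (μ : Fin (k + 1) → ℝ),
      (∀ i j, star (w i) ⬝ᵥ w j = if i = j then 1 else 0) ∧
      (∀ i, M *ᵥ w i = ((μ i : ℝ) : ℂ) • w i) ∧
      (∀ i, eigLarge hM ⟨k, hk⟩ ≤ μ i) := by
  classical
  set σ := Tuple.sort hM.eigenvalues with hσdef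
  have hidx : ∀ i : Fin (k + 1), n - 1 - (i : ℕ) < n := fun i => by omega
  refine ⟨fun i => (WithLp.equiv 2 _) (hM.eigenvectorBasis (σ ⟨n - 1 - i, hidx i⟩)),
    fun i => hM.eigenvalues (σ ⟨n - 1 - i, hidx i⟩), ?_, ?_, ?_⟩
  · intro i j
    have hON := (orthonormal_iff_ite.mp hM.eigenvectorBasis.orthonormal)
      (σ ⟨n - 1 - i, hidx i⟩) (σ ⟨n - 1 - j, hidx j⟩)
    rw [EuclideanSpace.inner_eq_star_dotProduct] at hON
    simp only [WithLp.equiv_apply]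
    rw [dotProduct_comm, hON]
    have hiff : (σ ⟨n - 1 - ↑i, hidx i⟩ = σ ⟨n - 1 - ↑j, hidx j⟩) ↔ i = j := by
      rw [Equiv.apply_eq_iff_eq]
      simp only [Fin.mk.injEq, Fin.ext_iff]
      have := i.isLt
      have := j.isLt
      constructor <;> (intro h; omega)
    rw [if_congr hiff rfl rfl]
  · intro i
    have h := hM.mulVec_eigenvectorBasis (σ ⟨n - 1 - i, hidx i⟩)
    simp only [WithLp.equiv_apply]
    rw [h]
    ext t
    simp [Complex.real_smul]
  · intro i
    rw [eigLarge_eq]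
    refine Tuple.monotone_sort hM.eigenvalues ?_
    rw [Fin.le_def, Fin.val_rev]
    simp only
    omega

/-- Cauchy interlacing (upper part): compression by an isometry does not increase the
`k`-th largest eigenvalue. -/
private lemma compress_le {n m k : ℕ} (hkm : k < m) (hkn : k < n)
    (M : Matrix (Fin n) (Fin n) ℂ) (hM : M.IsHermitian)
    (V : Matrix (Fin n) (Fin m) ℂ) (hV : Vᴴ * V = 1)
    (hB : (Vᴴ * M * V).IsHermitian) :
    eigLarge hB ⟨k, hkm⟩ ≤ eigLarge hM ⟨k, hkn⟩ := by
  obtain ⟨w, μ, horth, heig, hge⟩ := exists_top hkm hB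
  refine eig_ge_of_family hkn hM _ (fun i => V *ᵥ w i)
    (fun i j => by rw [isometry_dot V hV]; exact horth i j) ?_
  intro c
  have hVx : (∑ i, c i • (V *ᵥ w i)) = V *ᵥ (∑ i, c i • w i) := by
    rw [mulVec_sum']
    exact (Finset.sum_congr rfl fun i _ => by rw [mulVec_smul]).symm
  rw [hVx, ← compress_quad, quad_expand horth heig, Complex.ofReal_re]
  calc eigLarge hB ⟨k, hkm⟩ * ∑ i, ‖c i‖ ^ 2
      = ∑ i, eigLarge hB ⟨k, hkm⟩ * ‖c i‖ ^ 2 := Finset.mul_sum _ _ _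
    _ ≤ ∑ i, ‖c i‖ ^ 2 * μ i := by
        refine Finset.sum_le_sum fun i _ => ?_
        rw [mul_comm]
        exact mul_le_mul_of_nonneg_left (hge i) (sq_nonneg _)

end Aux

/-- low-rank property of eigenvalue maximization: if the column span of `V`
contains eigenvectors for the `J+1` largest eigenvalues of `A(ω*)` at a global maximizer
`ω*` of `λ_J(A(ω))` over `Ω`, then the reduced problem has the same globally maximal
value, attained at `ω*` (0-indexed `J`). -/
theorem stmt5 (d n m J : ℕ) (hJm : J < m) (hJn : J < n)
    (Ω : Set (EuclideanSpace ℝ (Fin d)))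
    (A : EuclideanSpace ℝ (Fin d) → Matrix (Fin n) (Fin n) ℂ)
    (hA : ∀ ω, (A ω).IsHermitian)
    (ωs : EuclideanSpace ℝ (Fin d)) (hωs : ωs ∈ Ω)
    (hmax : ∀ ω ∈ Ω, eigLarge (hA ω) ⟨J, hJn⟩ ≤ eigLarge (hA ωs) ⟨J, hJn⟩)
    (s : Fin n → (Fin n → ℂ))
    (hortho : ∀ i j, star (s i) ⬝ᵥ s j = if i = j then 1 else 0)
    (heig : ∀ i, A ωs *ᵥ s i = (eigLarge (hA ωs) i : ℂ) • s i)
    (V : Matrix (Fin n) (Fin m) ℂ) (hV : Vᴴ * V = 1)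
    (hspan : ∀ i : Fin n, (i : ℕ) ≤ J → ∃ c : Fin m → ℂ, s i = V *ᵥ c)
    (hC : ∀ ω, (Vᴴ * A ω * V).IsHermitian) :
    eigLarge (hC ωs) ⟨J, hJm⟩ = eigLarge (hA ωs) ⟨J, hJn⟩ ∧
    ∀ ω ∈ Ω, eigLarge (hC ω) ⟨J, hJm⟩ ≤ eigLarge (hC ωs) ⟨J, hJm⟩ := by
  classical
  have hJn1 : J + 1 ≤ n := hJn
  set ι : Fin (J + 1) → Fin n := Fin.castLE hJn1 with hιdef
  have hιval : ∀ i : Fin (J + 1), (ι i : ℕ) = (i : ℕ) := fun i => rfl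
  choose c hc using fun i : Fin (J + 1) => hspan (ι i) (by rw [hιval]; omega)
  -- orthonormality of the coefficient vectors
  have hcorth : ∀ i j, star (c i) ⬝ᵥ c j = if i = j then 1 else 0 := by
    intro i j
    rw [← isometry_dot V hV, ← hc, ← hc, hortho]
    congr 1
    simp [hιdef, Fin.ext_iff, Fin.castLE]
  -- the restricted eigenvector family
  have hsorth : ∀ i j : Fin (J + 1), star (s (ι i)) ⬝ᵥ s (ι j) = if i = j then 1 else 0 := by
    intro i j
    rw [hortho]
    congr 1
    simp [hιdef, Fin.ext_iff, Fin.castLE]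
  have hseig : ∀ i : Fin (J + 1),
      A ωs *ᵥ s (ι i) = ((eigLarge (hA ωs) (ι i) : ℝ) : ℂ) • s (ι i) := fun i => heig (ι i)
  -- Step 1: eigLarge (hC ωs) ⟨J, hJm⟩ ≥ eigLarge (hA ωs) ⟨J, hJn⟩
  have hge : eigLarge (hA ωs) ⟨J, hJn⟩ ≤ eigLarge (hC ωs) ⟨J, hJm⟩ := by
    refine eig_ge_of_family hJm (hC ωs) _ c hcorth ?_
    intro z
    have hVx : V *ᵥ (∑ i, z i • c i) = ∑ i, z i • s (ι i) := by
      rw [mulVec_sum']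
      exact Finset.sum_congr rfl fun i _ => by rw [mulVec_smul, ← hc]
    rw [compress_quad, hVx, quad_expand hsorth hseig, Complex.ofReal_re]
    calc eigLarge (hA ωs) ⟨J, hJn⟩ * ∑ i, ‖z i‖ ^ 2
        = ∑ i, eigLarge (hA ωs) ⟨J, hJn⟩ * ‖z i‖ ^ 2 := Finset.mul_sum _ _ _
      _ ≤ ∑ i, ‖z i‖ ^ 2 * eigLarge (hA ωs) (ι i) := by
          refine Finset.sum_le_sum fun i _ => ?_
          rw [mul_comm]
          refine mul_le_mul_of_nonneg_left ?_ (sq_nonneg _)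
          -- eigLarge antitone in index
          rw [eigLarge_eq, eigLarge_eq]
          refine Tuple.monotone_sort (hA ωs).eigenvalues ?_
          rw [Fin.le_def, Fin.val_rev, Fin.val_rev]
          have := hιval i
          have hi : (i : ℕ) ≤ J := by omega
          simp only [hιdef, Fin.castLE]
          omega
  have hle := compress_le hJm hJn (A ωs) (hA ωs) V hV (hC ωs)
  have heq : eigLarge (hC ωs) ⟨J, hJm⟩ = eigLarge (hA ωs) ⟨J, hJn⟩ := le_antisymm hle hge
  refine ⟨heq, fun ω hω => ?_⟩
  calc eigLarge (hC ω) ⟨J, hJm⟩ ≤ eigLarge (hA ω) ⟨J, hJn⟩ :=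
        compress_le hJm hJn (A ω) (hA ω) V hV (hC ω)
    _ ≤ eigLarge (hA ωs) ⟨J, hJn⟩ := hmax ω hω
    _ = eigLarge (hC ωs) ⟨J, hJm⟩ := heq.symm
end

section
/- Let A be an n×n Hermitian matrix, S the J-dimensional span of eigenvectors corresponding to its J largest eigenvalues, and Ŝ a J-dimensional subspace with d(Ŝ, S) = ε, where d(Ŝ,S) = max over unit v̂ ∈ Ŝ of the distance from v̂ to S. Let V be an n×m matrix with orthonormal columns whose column span contains Ŝ. Then λ_J(A) − λ_J(V* A V) ≤ C ε² for a constant C depending only on ‖A‖₂ (and not on ε), for ε sufficiently small; in particular the eigenvalue gap is O(ε²), not merely O(ε). -/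
set_option linter.unusedSectionVars false

open Matrix

namespace Stmt7Aux

variable {q : ℕ} {ι : Type*} [Fintype ι] [DecidableEq ι]

lemma dot_conj (x y : Fin q → ℂ) : star x ⬝ᵥ y = starRingEnd ℂ (star y ⬝ᵥ x) := by
  simp [dotProduct, map_sum, mul_comm]

lemma dot_sum {F : Finset ι} (x : Fin q → ℂ) (f : ι → Fin q → ℂ) :
    x ⬝ᵥ (∑ j ∈ F, f j) = ∑ j ∈ F, x ⬝ᵥ f j := by
  simp [dotProduct, Finset.mul_sum]
  exact Finset.sum_comm

lemma dot_self_eq (x : Fin q → ℂ) : star x ⬝ᵥ x = ((∑ i, ‖x i‖ ^ 2 : ℝ) : ℂ) := by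
  simp only [dotProduct, Pi.star_apply, Complex.ofReal_sum]
  refine Finset.sum_congr rfl fun i _ => ?_
  rw [mul_comm, Complex.ofReal_pow]
  exact Complex.mul_conj' (x i)

lemma dot_self_re_nonneg (x : Fin q → ℂ) : 0 ≤ (star x ⬝ᵥ x).re := by
  rw [dot_self_eq, Complex.ofReal_re]
  positivity

lemma dot_self_re_pos {x : Fin q → ℂ} (hx : x ≠ 0) : 0 < (star x ⬝ᵥ x).re := by
  rw [dot_self_eq, Complex.ofReal_re]
  obtain ⟨i, hi⟩ : ∃ i, x i ≠ 0 := by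
    by_contra h; push_neg at h; exact hx (funext h)
  exact Finset.sum_pos' (fun j _ => by positivity)
    ⟨i, Finset.mem_univ i, by have := norm_pos_iff.mpr hi; positivity⟩

/-- Orthogonality of a fixed vector against a span of generators. -/
lemma span_perp (u : ι → Fin q → ℂ) (t : Set ι) (δ : Fin q → ℂ)
    (hδ : ∀ i ∈ t, star δ ⬝ᵥ u i = 0) :
    ∀ y ∈ Submodule.span ℂ (u '' t), star δ ⬝ᵥ y = 0 := by
  intro y hy
  induction hy using Submodule.span_induction with
  | mem x h => obtain ⟨i, hi, rfl⟩ := h; exact hδ i hi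
  | zero => simp
  | add x y hx hy ihx ihy => rw [dotProduct_add, ihx, ihy, add_zero]
  | smul a x hx ih => rw [dotProduct_smul, ih, smul_zero]

lemma span_perp' (u : ι → Fin q → ℂ) (t : Set ι) (δ : Fin q → ℂ)
    (hδ : ∀ i ∈ t, star (u i) ⬝ᵥ δ = 0) :
    ∀ y ∈ Submodule.span ℂ (u '' t), star y ⬝ᵥ δ = 0 := by
  intro y hy
  rw [dot_conj]
  rw [span_perp u t δ (fun i hi => by rw [dot_conj, hδ i hi, map_zero]) y hy, map_zero]

/-- Expansion of an element of the span of an orthonormal family. -/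
lemma span_repr (u : ι → Fin q → ℂ)
    (horth : ∀ i j, star (u i) ⬝ᵥ u j = if i = j then 1 else 0)
    (t : Set ι) {x} (hx : x ∈ Submodule.span ℂ (u '' t)) :
    x = ∑ i, (star (u i) ⬝ᵥ x) • u i := by
  induction hx using Submodule.span_induction with
  | mem y h =>
    obtain ⟨j, hj, rfl⟩ := h
    simp only [horth]
    rw [Finset.sum_congr rfl (fun i _ => ite_smul _ _ _ _)]
    simp
  | zero => simp
  | add y z hy hz ihy ihz =>
    conv_lhs => rw [ihy, ihz]
    simp only [dotProduct_add, add_smul, Finset.sum_add_distrib]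
  | smul a y hy ih =>
    conv_lhs => rw [ih]
    simp only [dotProduct_smul, smul_assoc, Finset.smul_sum]

lemma orth_li (u : ι → Fin q → ℂ)
    (horth : ∀ i j, star (u i) ⬝ᵥ u j = if i = j then 1 else 0) :
    LinearIndependent ℂ u := by
  rw [Fintype.linearIndependent_iff]
  intro g hg j
  have : star (u j) ⬝ᵥ (∑ i, g i • u i) = g j := by
    rw [dot_sum]
    simp only [dotProduct_smul, horth, smul_ite, smul_eq_mul, mul_one, mul_zero]
    simp [eq_comm]
  rw [hg] at this
  simpa using this.symm

lemma rayleigh_eq (M : Matrix (Fin q) (Fin q) ℂ) (u : ι → Fin q → ℂ) (μ : ι → ℝ)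
    (horth : ∀ i j, star (u i) ⬝ᵥ u j = if i = j then 1 else 0)
    (heig : ∀ i, M *ᵥ u i = (μ i : ℂ) • u i)
    (t : Set ι) {x} (hx : x ∈ Submodule.span ℂ (u '' t)) :
    (star x ⬝ᵥ (M *ᵥ x)).re = ∑ i, μ i * ‖star (u i) ⬝ᵥ x‖ ^ 2 ∧
      (star x ⬝ᵥ x).re = ∑ i, ‖star (u i) ⬝ᵥ x‖ ^ 2 := by
  set c : ι → ℂ := fun i => star (u i) ⬝ᵥ x with hc
  have hrep : x = ∑ i, c i • u i := span_repr u horth t hx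
  have hxu : ∀ i, star x ⬝ᵥ u i = starRingEnd ℂ (c i) := fun i => dot_conj x (u i)
  have hMx : M *ᵥ x = ∑ i, c i • ((μ i : ℂ) • u i) := by
    conv_lhs => rw [hrep]
    rw [show M *ᵥ (∑ i, c i • u i) = M.mulVecLin (∑ i, c i • u i) from rfl]
    rw [map_sum]
    exact Finset.sum_congr rfl fun i _ => by
      rw [_root_.map_smul, Matrix.mulVecLin_apply, heig]
  constructor
  · rw [hMx, dot_sum]
    have : ∀ i, star x ⬝ᵥ (c i • ((μ i : ℂ) • u i)) = ((μ i * ‖c i‖ ^ 2 : ℝ) : ℂ) := by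
      intro i
      rw [dotProduct_smul, dotProduct_smul, hxu, smul_eq_mul, smul_eq_mul,
        show c i * ((μ i : ℂ) * starRingEnd ℂ (c i)) =
          (μ i : ℂ) * (c i * starRingEnd ℂ (c i)) by ring, Complex.mul_conj']
      push_cast
      ring
    rw [Finset.sum_congr rfl fun i _ => this i, ← Complex.ofReal_sum, Complex.ofReal_re]
  · nth_rewrite 2 [hrep]
    rw [dot_sum]
    have : ∀ i, star x ⬝ᵥ (c i • u i) = ((‖c i‖ ^ 2 : ℝ) : ℂ) := by
      intro i
      rw [dotProduct_smul, hxu, smul_eq_mul, Complex.mul_conj']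
      push_cast
      ring
    rw [Finset.sum_congr rfl fun i _ => this i, ← Complex.ofReal_sum, Complex.ofReal_re]

lemma rayleigh_ge (M : Matrix (Fin q) (Fin q) ℂ) (u : ι → Fin q → ℂ) (μ : ι → ℝ)
    (horth : ∀ i j, star (u i) ⬝ᵥ u j = if i = j then 1 else 0)
    (heig : ∀ i, M *ᵥ u i = (μ i : ℂ) • u i)
    (t : Set ι) (α : ℝ) (hμ : ∀ i ∈ t, α ≤ μ i)
    {x} (hx : x ∈ Submodule.span ℂ (u '' t)) :
    α * (star x ⬝ᵥ x).re ≤ (star x ⬝ᵥ (M *ᵥ x)).re := by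
  obtain ⟨h1, h2⟩ := rayleigh_eq M u μ horth heig t hx
  rw [h1, h2, Finset.mul_sum]
  refine Finset.sum_le_sum fun i _ => ?_
  by_cases hi : i ∈ t
  · exact mul_le_mul_of_nonneg_right (hμ i hi) (by positivity)
  · have hz : star (u i) ⬝ᵥ x = 0 := by
      refine span_perp u t (u i) (fun j hj => ?_) x hx
      rw [horth]
      simp only [ite_eq_right_iff]
      intro h; exact absurd (h ▸ hj) hi
    rw [hz]
    simp

lemma rayleigh_le (M : Matrix (Fin q) (Fin q) ℂ) (u : ι → Fin q → ℂ) (μ : ι → ℝ)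
    (horth : ∀ i j, star (u i) ⬝ᵥ u j = if i = j then 1 else 0)
    (heig : ∀ i, M *ᵥ u i = (μ i : ℂ) • u i)
    (t : Set ι) (α : ℝ) (hμ : ∀ i ∈ t, μ i ≤ α)
    {x} (hx : x ∈ Submodule.span ℂ (u '' t)) :
    (star x ⬝ᵥ (M *ᵥ x)).re ≤ α * (star x ⬝ᵥ x).re := by
  have h := rayleigh_ge (-M) u (fun i => -μ i) horth
    (fun i => by rw [Matrix.neg_mulVec, heig i]; push_cast; rw [neg_smul])
    t (-α) (fun i hi => neg_le_neg (hμ i hi)) hx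
  rw [Matrix.neg_mulVec, dotProduct_neg] at h
  simp only [Complex.neg_re, neg_mul] at h
  linarith

lemma dot_A_re_bound {p : ℕ} (A : Matrix (Fin p) (Fin p) ℂ) (x : Fin p → ℂ) :
    |(star x ⬝ᵥ (A *ᵥ x)).re| ≤ specNorm A * (star x ⬝ᵥ x).re := by
  set x' : EuclideanSpace ℂ (Fin p) := (WithLp.equiv 2 (Fin p → ℂ)).symm x with hx'
  have h1 : (inner ℂ x' (Matrix.toEuclideanCLM (𝕜 := ℂ) A x') : ℂ) = star x ⬝ᵥ (A *ᵥ x) := by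
    rw [dotProduct_comm]
    rfl
  have h2 : (star x ⬝ᵥ x).re = ‖x'‖ ^ 2 := by
    rw [← inner_self_eq_norm_sq (𝕜 := ℂ) x', dotProduct_comm]
    rfl
  calc |(star x ⬝ᵥ (A *ᵥ x)).re| ≤ ‖star x ⬝ᵥ (A *ᵥ x)‖ := Complex.abs_re_le_norm _
    _ = ‖(inner ℂ x' (Matrix.toEuclideanCLM (𝕜 := ℂ) A x') : ℂ)‖ := by rw [h1]
    _ ≤ ‖x'‖ * ‖Matrix.toEuclideanCLM (𝕜 := ℂ) A x'‖ := norm_inner_le_norm _ _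
    _ ≤ ‖x'‖ * (specNorm A * ‖x'‖) := by
        gcongr
        exact (Matrix.toEuclideanCLM (𝕜 := ℂ) A).le_opNorm x'
    _ = specNorm A * (star x ⬝ᵥ x).re := by rw [h2]; ring

end Stmt7Aux

set_option maxHeartbeats 1000000 in
open Stmt7Aux in
/-- accuracy of reduced problems: if the column span of `V` contains a
`(J+1)`-dimensional subspace `Ŝ` whose (Euclidean) distance to the span `S` of the
eigenvectors for the `J+1` largest eigenvalues of `A` is at most `ε`, then
`λ_J(A) − λ_J(Vᴴ A V) ≤ C ε²` with a constant `C` depending only on `‖A‖₂`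
(0-indexed `J`, `ε` small). Distances and norms are expressed via `⬝ᵥ`. -/
theorem stmt7 :
    ∃ C : ℝ → ℝ, ∀ (n m J : ℕ) (hJm : J < m) (hJn : J < n)
      (A : Matrix (Fin n) (Fin n) ℂ) (hA : A.IsHermitian)
      (s : Fin n → (Fin n → ℂ)),
      (∀ i j, star (s i) ⬝ᵥ s j = if i = j then 1 else 0) →
      (∀ i, A *ᵥ s i = (eigLarge hA i : ℂ) • s i) →
      ∀ Shat : Submodule ℂ (Fin n → ℂ), Module.finrank ℂ Shat = J + 1 →
      ∀ ε : ℝ, 0 ≤ ε → ε ≤ 1 →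
      (∀ v ∈ Shat, star v ⬝ᵥ v = 1 →
        ∃ w ∈ Submodule.span ℂ (s '' {i : Fin n | (i : ℕ) ≤ J}),
          (star (v - w) ⬝ᵥ (v - w)).re ≤ ε ^ 2) →
      ∀ V : Matrix (Fin n) (Fin m) ℂ, Vᴴ * V = 1 →
      (∀ v ∈ Shat, ∃ c : Fin m → ℂ, v = V *ᵥ c) →
      ∀ hC : (Vᴴ * A * V).IsHermitian,
        eigLarge hA ⟨J, hJn⟩ - eigLarge hC ⟨J, hJm⟩ ≤ C (specNorm A) * ε ^ 2 := by
  classical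
  refine ⟨fun x => 2 * x, ?_⟩
  intro n m J hJm hJn A hA s horth heig Shat hShat ε hε0 hε1 hdist V hV hVS hC
  set t : Set (Fin n) := {i : Fin n | (i : ℕ) ≤ J} with ht
  set lA := eigLarge hA ⟨J, hJn⟩ with hlA
  set M := Vᴴ * A * V with hMdef
  set σ := Tuple.sort hC.eigenvalues with hσ
  set u : Fin m → (Fin m → ℂ) := fun i => ⇑(hC.eigenvectorBasis (σ i)) with hu
  set μ : Fin m → ℝ := fun i => hC.eigenvalues (σ i) with hμdef
  have huorth : ∀ i j, star (u i) ⬝ᵥ u j = if i = j then 1 else 0 := by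
    intro i j
    have h := orthonormal_iff_ite.mp hC.eigenvectorBasis.orthonormal (σ i) (σ j)
    rw [EuclideanSpace.inner_eq_star_dotProduct, dotProduct_comm] at h
    simpa [σ.injective.eq_iff] using h
  have heigM : ∀ i, M *ᵥ u i = ((μ i : ℂ)) • u i := by
    intro i
    have h : M *ᵥ u i = hC.eigenvalues (σ i) • u i := hC.mulVec_eigenvectorBasis (σ i)
    rw [h]
    funext j
    simp [Complex.real_smul, hμdef]
  have hmono : Monotone μ := Tuple.monotone_sort hC.eigenvalues
  set K : Fin m := (⟨J, hJm⟩ : Fin m).rev with hK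
  have heq : eigLarge hC ⟨J, hJm⟩ = μ K := rfl
  -- the coordinate subspace T
  set T := Submodule.comap (Matrix.mulVecLin V) Shat with hT
  have hmapT : Submodule.map (Matrix.mulVecLin V) T = Shat := by
    rw [hT, Submodule.map_comap_eq]
    refine inf_eq_right.mpr fun v hv => ?_
    obtain ⟨c, hc⟩ := hVS v hv
    exact ⟨c, by simp [Matrix.mulVecLin_apply, hc]⟩
  have hTrank : J + 1 ≤ Module.finrank ℂ T := by
    calc J + 1 = Module.finrank ℂ Shat := hShat.symm
      _ = Module.finrank ℂ (Submodule.map (Matrix.mulVecLin V) T) := by rw [hmapT]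
      _ ≤ Module.finrank ℂ T := Submodule.finrank_map_le _ _
  -- the subspace W spanned by the m - J smallest eigenvectors of M
  set tW : Set (Fin m) := {i : Fin m | (i : ℕ) ≤ (K : ℕ)} with htW
  set W := Submodule.span ℂ (u '' tW) with hW
  have hKm : (K : ℕ) + 1 ≤ m := K.isLt
  have hrange : Set.range (fun j : Fin ((K : ℕ) + 1) => u (Fin.castLE hKm j)) = u '' tW := by
    ext y
    constructor
    · rintro ⟨j, rfl⟩
      refine ⟨Fin.castLE hKm j, ?_, rfl⟩
      simp only [htW, Set.mem_setOf_eq, Fin.coe_castLE]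
      exact Nat.lt_succ_iff.mp j.isLt
    · rintro ⟨i, hi, rfl⟩
      have hi' : (i : ℕ) < (K : ℕ) + 1 := Nat.lt_succ_iff.mpr hi
      exact ⟨⟨(i : ℕ), hi'⟩, rfl⟩
  have hWrank : Module.finrank ℂ W = (K : ℕ) + 1 := by
    rw [hW, ← hrange, finrank_span_eq_card (orth_li _ (fun i j => by
      rw [huorth]
      simp [Fin.castLE_inj]))]
    simp
  have hfin : Module.finrank ℂ (Fin m → ℂ) = m := by simp
  have hsup := Submodule.finrank_sup_add_finrank_inf_eq T W
  have hsuple : Module.finrank ℂ ↥(T ⊔ W) ≤ m := by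
    have h := Submodule.finrank_le (T ⊔ W)
    rw [hfin] at h
    exact h
  have hKval : (K : ℕ) = m - 1 - J := by rw [hK]; simp [Fin.val_rev]; omega
  have hinf : 0 < Module.finrank ℂ ↥(T ⊓ W) := by omega
  obtain ⟨x0, hx00⟩ := Module.finrank_pos_iff_exists_ne_zero.mp hinf
  obtain ⟨c, hcTW⟩ := x0
  have hc0 : c ≠ 0 := fun h => hx00 (Subtype.ext h)
  -- normalize
  have hν : 0 < (star c ⬝ᵥ c).re := dot_self_re_pos hc0
  set ν := (star c ⬝ᵥ c).re with hνdef
  have hνc : star c ⬝ᵥ c = (ν : ℂ) := by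
    rw [dot_self_eq]
    congr 1
    rw [hνdef, dot_self_eq, Complex.ofReal_re]
  set r : ℝ := (Real.sqrt ν)⁻¹ with hr
  have hrr : r * (r * ν) = 1 := by
    rw [hr, ← mul_assoc, ← mul_inv, Real.mul_self_sqrt hν.le, inv_mul_cancel₀ (ne_of_gt hν)]
  set c₀ := (r : ℂ) • c with hc₀def
  have hc₀T : c₀ ∈ T := T.smul_mem _ hcTW.1
  have hc₀W : c₀ ∈ W := W.smul_mem _ hcTW.2
  have hunit : star c₀ ⬝ᵥ c₀ = 1 := by
    rw [hc₀def, star_smul, smul_dotProduct, dotProduct_smul, hνc]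
    simp only [star_trivial, RCLike.star_def, Complex.conj_ofReal, smul_eq_mul]
    rw [← Complex.ofReal_mul, ← Complex.ofReal_mul, hrr, Complex.ofReal_one]
  set vh := V *ᵥ c₀ with hvh
  have hvhS : vh ∈ Shat := by
    have h := hc₀T
    rw [hT, Submodule.mem_comap, Matrix.mulVecLin_apply] at h
    exact h
  have hVdot : ∀ x y : Fin m → ℂ, star (V *ᵥ x) ⬝ᵥ (V *ᵥ y) = star x ⬝ᵥ y := by
    intro x y
    rw [Matrix.star_mulVec, Matrix.dotProduct_mulVec, Matrix.vecMul_vecMul, hV,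
      Matrix.vecMul_one]
  have hvhunit : star vh ⬝ᵥ vh = 1 := by rw [hvh, hVdot, hunit]
  have hMA : star c₀ ⬝ᵥ (M *ᵥ c₀) = star vh ⬝ᵥ (A *ᵥ vh) := by
    rw [hvh, hMdef]
    rw [show (Vᴴ * A * V) *ᵥ c₀ = Vᴴ *ᵥ (A *ᵥ (V *ᵥ c₀)) by
      rw [Matrix.mulVec_mulVec, Matrix.mulVec_mulVec, Matrix.mul_assoc]]
    rw [Matrix.dotProduct_mulVec, ← Matrix.star_mulVec]
  -- the M side: Rayleigh quotient bounded by eigLarge hC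
  have hMside : (star c₀ ⬝ᵥ (M *ᵥ c₀)).re ≤ eigLarge hC ⟨J, hJm⟩ := by
    have h := rayleigh_le M u μ huorth heigM tW (μ K)
      (fun i hi => hmono (by exact hi)) hc₀W
    rw [hunit] at h
    rw [heq]
    simpa using h
  -- the A side
  set co : Fin n → ℂ := fun i => star (s i) ⬝ᵥ vh with hco
  set w' : Fin n → ℂ := ∑ i : Fin n, (if (i : ℕ) ≤ J then co i else 0) • s i with hw'
  have hw'mem : w' ∈ Submodule.span ℂ (s '' t) := by
    refine Submodule.sum_mem _ fun i _ => ?_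
    by_cases hi : (i : ℕ) ≤ J
    · simp only [hi, if_true]
      exact Submodule.smul_mem _ _ (Submodule.subset_span ⟨i, hi, rfl⟩)
    · simp [hi]
  set δ := vh - w' with hδdef
  have hδorth : ∀ i ∈ t, star (s i) ⬝ᵥ δ = 0 := by
    intro i hi
    have hit : (i : ℕ) ≤ J := hi
    rw [hδdef, dotProduct_sub]
    have hwi : star (s i) ⬝ᵥ w' = co i := by
      rw [hw', dot_sum]
      rw [Finset.sum_eq_single i (fun j _ hj => by
        rw [dotProduct_smul, horth]
        simp [Ne.symm hj]) (by simp)]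
      rw [dotProduct_smul, horth]
      simp [hit]
    rw [hwi, hco, sub_self]
  have hδperp : ∀ y ∈ Submodule.span ℂ (s '' t), star y ⬝ᵥ δ = 0 := span_perp' s t δ hδorth
  have hδperp2 : ∀ y ∈ Submodule.span ℂ (s '' t), star δ ⬝ᵥ y = 0 := by
    intro y hy
    rw [dot_conj, hδperp y hy, map_zero]
  obtain ⟨w, hwmem, hwdist⟩ := hdist vh hvhS hvhunit
  have hd : (star δ ⬝ᵥ δ).re ≤ ε ^ 2 := by
    have he : w' - w ∈ Submodule.span ℂ (s '' t) := Submodule.sub_mem _ hw'mem hwmem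
    have hsplit : vh - w = δ + (w' - w) := by rw [hδdef]; abel
    have hcalc : (star (vh - w) ⬝ᵥ (vh - w)).re =
        (star δ ⬝ᵥ δ).re + (star (w' - w) ⬝ᵥ (w' - w)).re := by
      rw [hsplit, star_add, add_dotProduct, dotProduct_add,
        dotProduct_add, hδperp2 _ he, hδperp _ he]
      simp
    have hnn := dot_self_re_nonneg (w' - w)
    rw [hcalc] at hwdist
    linarith
  have hdnn : 0 ≤ (star δ ⬝ᵥ δ).re := dot_self_re_nonneg δ
  have hvh' : vh = w' + δ := by rw [hδdef]; abel
  have hsplit1 : (1 : ℝ) = (star w' ⬝ᵥ w').re + (star δ ⬝ᵥ δ).re := by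
    have hcalc : (star vh ⬝ᵥ vh).re = (star w' ⬝ᵥ w').re + (star δ ⬝ᵥ δ).re := by
      rw [hvh', star_add, add_dotProduct, dotProduct_add, dotProduct_add,
        hδperp _ hw'mem, hδperp2 _ hw'mem]
      simp
    rw [← hcalc, hvhunit, Complex.one_re]
  have hAw'eq : A *ᵥ w' = ∑ i : Fin n, (if (i : ℕ) ≤ J then co i else 0) • ((eigLarge hA i : ℂ) • s i) := by
    rw [hw', show A *ᵥ (∑ i : Fin n, (if (i : ℕ) ≤ J then co i else 0) • s i) =
      A.mulVecLin (∑ i : Fin n, (if (i : ℕ) ≤ J then co i else 0) • s i) from rfl, map_sum]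
    exact Finset.sum_congr rfl fun i _ => by
      rw [_root_.map_smul, Matrix.mulVecLin_apply, heig]
  have hAw' : A *ᵥ w' ∈ Submodule.span ℂ (s '' t) := by
    rw [hAw'eq]
    refine Submodule.sum_mem _ fun i _ => ?_
    by_cases hi : (i : ℕ) ≤ J
    · simp only [hi, if_true]
      exact Submodule.smul_mem _ _ (Submodule.smul_mem _ _ (Submodule.subset_span ⟨i, hi, rfl⟩))
    · simp [hi]
  have hcross1 : star δ ⬝ᵥ (A *ᵥ w') = 0 := hδperp2 _ hAw'
  have hcross2 : star w' ⬝ᵥ (A *ᵥ δ) = 0 := by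
    rw [Matrix.dotProduct_mulVec,
      show star w' ᵥ* A = star (A *ᵥ w') by rw [Matrix.star_mulVec, hA.eq]]
    exact hδperp _ hAw'
  have hsplitE : (star vh ⬝ᵥ (A *ᵥ vh)).re =
      (star w' ⬝ᵥ (A *ᵥ w')).re + (star δ ⬝ᵥ (A *ᵥ δ)).re := by
    rw [hvh', Matrix.mulVec_add, star_add, add_dotProduct, dotProduct_add,
      dotProduct_add, hcross1, hcross2]
    simp
  have hAside : lA * (star w' ⬝ᵥ w').re ≤ (star w' ⬝ᵥ (A *ᵥ w')).re := by
    refine rayleigh_ge A s (eigLarge hA) horth heig t lA (fun i hi => ?_) hw'mem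
    exact Tuple.monotone_sort hA.eigenvalues (Fin.rev_le_rev.mpr (by exact hi))
  have hδE : -(specNorm A * (star δ ⬝ᵥ δ).re) ≤ (star δ ⬝ᵥ (A *ᵥ δ)).re := by
    have h := dot_A_re_bound A δ
    have := neg_abs_le ((star δ ⬝ᵥ (A *ᵥ δ)).re)
    linarith
  have hlAbound : |lA| ≤ specNorm A := by
    have h1 : star (s ⟨J, hJn⟩) ⬝ᵥ (A *ᵥ s ⟨J, hJn⟩) = (lA : ℂ) := by
      rw [heig, dotProduct_smul, horth]
      simp [hlA]
    have h2 := dot_A_re_bound A (s ⟨J, hJn⟩)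
    rw [h1, horth] at h2
    simpa using h2
  have hspecnn : 0 ≤ specNorm A := norm_nonneg _
  obtain ⟨hlAlb, hlAub⟩ := abs_le.mp hlAbound
  have hMAre : (star c₀ ⬝ᵥ (M *ᵥ c₀)).re = (star vh ⬝ᵥ (A *ᵥ vh)).re := by rw [hMA]
  have hεsq : 0 ≤ ε ^ 2 := by positivity
  show lA - eigLarge hC ⟨J, hJm⟩ ≤ (fun x => 2 * x) (specNorm A) * ε ^ 2
  simp only
  nlinarith [mul_nonneg (sub_nonneg.mpr hlAub) hdnn,
    mul_nonneg hspecnn (sub_nonneg.mpr hd),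
    mul_nonneg (add_nonneg (neg_le_iff_add_nonneg.mp hlAlb) hspecnn) hdnn]
end

section
/- Let λ_J : Ω → ℝ be continuous on a compact set Ω ⊆ ℝ^d, and for each k let λ_J^{(k)} : Ω → ℝ be functions satisfying: (a) λ_J^{(k)}(ω) ≤ λ_J^{(p)}(ω) ≤ λ_J(ω) for all ω ∈ Ω and all k ≤ p (monotonicity), (b) λ_J^{(k)}(ω^{(k)}) = λ_J(ω^{(k)}) where ω^{(k+1)} is a global minimizer of λ_J^{(k)} over Ω (interpolation), and (c) all λ_J^{(k)} are Lipschitz with a common constant γ. Then for every convergent subsequence ω^{(ℓ_k)} → ω̄ of the sequence of iterates, ω̄ is a global minimizer of λ_J over Ω. -/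
open Matrix

/-- global convergence of the greedy subspace minimization procedure:
every convergent subsequence of the iterates converges to a global minimizer. -/
theorem stmt9 (d : ℕ) (Ω : Set (EuclideanSpace ℝ (Fin d))) (hΩc : IsCompact Ω)
    (f : EuclideanSpace ℝ (Fin d) → ℝ) (hf : ContinuousOn f Ω)
    (g : ℕ → EuclideanSpace ℝ (Fin d) → ℝ)
    (γ : NNReal) (hLip : ∀ k, LipschitzOnWith γ (g k) Ω)
    (hmono : ∀ k p, k ≤ p → ∀ ω ∈ Ω, g k ω ≤ g p ω)
    (hub : ∀ k, ∀ ω ∈ Ω, g k ω ≤ f ω)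
    (ω : ℕ → EuclideanSpace ℝ (Fin d)) (hωΩ : ∀ k, ω k ∈ Ω)
    (hinterp : ∀ k, g k (ω k) = f (ω k))
    (hargmin : ∀ k, ∀ x ∈ Ω, g k (ω (k + 1)) ≤ g k x)
    (φ : ℕ → ℕ) (hφ : StrictMono φ)
    (ωbar : EuclideanSpace ℝ (Fin d))
    (hconv : Filter.Tendsto (fun k => ω (φ k)) Filter.atTop (nhds ωbar)) :
    ωbar ∈ Ω ∧ ∀ x ∈ Ω, f ωbar ≤ f x := by
  have hΩcl : IsClosed Ω := hΩc.isClosed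
  have hmem : ωbar ∈ Ω :=
    hΩcl.mem_of_tendsto hconv (Filter.Eventually.of_forall fun k => hωΩ (φ k))
  refine ⟨hmem, fun x hx => ?_⟩
  -- key pointwise inequality
  have key : ∀ k : ℕ, f (ω (φ k)) ≤ f x + γ * dist (ω (φ (k + 1))) (ω (φ k)) := by
    intro k
    have hlt : φ k < φ (k + 1) := hφ (Nat.lt_succ_self k)
    have hpos : 1 ≤ φ (k + 1) := Nat.one_le_iff_ne_zero.mpr (Nat.pos_of_ne_zero (by omega)).ne'
    have hle : φ k ≤ φ (k + 1) - 1 := Nat.le_sub_one_of_lt hlt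
    have hsucc : φ (k + 1) - 1 + 1 = φ (k + 1) := Nat.succ_pred_eq_of_pos hpos
    -- g (φ k) (ω (φ (k+1))) ≤ f x
    have h1 : g (φ k) (ω (φ (k + 1))) ≤ f x := by
      calc g (φ k) (ω (φ (k + 1)))
          ≤ g (φ (k + 1) - 1) (ω (φ (k + 1))) :=
            hmono _ _ hle _ (hωΩ _)
        _ ≤ g (φ (k + 1) - 1) x := by
            have := hargmin (φ (k + 1) - 1) x hx
            rwa [hsucc] at this
        _ ≤ f x := hub _ x hx
    -- Lipschitz bound
    have h2 : g (φ k) (ω (φ k)) ≤ g (φ k) (ω (φ (k + 1)))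
        + γ * dist (ω (φ (k + 1))) (ω (φ k)) := by
      have hd := (hLip (φ k)).dist_le_mul (ω (φ k)) (hωΩ _) (ω (φ (k + 1))) (hωΩ _)
      have := abs_sub_abs_le_abs_sub (g (φ k) (ω (φ k))) (g (φ k) (ω (φ (k + 1))))
      have habs : g (φ k) (ω (φ k)) - g (φ k) (ω (φ (k + 1)))
          ≤ γ * dist (ω (φ (k + 1))) (ω (φ k)) := by
        calc g (φ k) (ω (φ k)) - g (φ k) (ω (φ (k + 1)))
            ≤ |g (φ k) (ω (φ k)) - g (φ k) (ω (φ (k + 1)))| := le_abs_self _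
          _ = dist (g (φ k) (ω (φ k))) (g (φ k) (ω (φ (k + 1)))) := (Real.dist_eq _ _).symm
          _ ≤ γ * dist (ω (φ k)) (ω (φ (k + 1))) := hd
          _ = γ * dist (ω (φ (k + 1))) (ω (φ k)) := by rw [dist_comm]
      linarith
    calc f (ω (φ k)) = g (φ k) (ω (φ k)) := (hinterp (φ k)).symm
      _ ≤ g (φ k) (ω (φ (k + 1))) + γ * dist (ω (φ (k + 1))) (ω (φ k)) := h2
      _ ≤ f x + γ * dist (ω (φ (k + 1))) (ω (φ k)) := by linarith
  -- limits
  have hconv' : Filter.Tendsto (fun k => ω (φ (k + 1))) Filter.atTop (nhds ωbar) :=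
    hconv.comp (Filter.tendsto_add_atTop_nat 1)
  have hdist : Filter.Tendsto (fun k => dist (ω (φ (k + 1))) (ω (φ k)))
      Filter.atTop (nhds 0) := by
    have := hconv'.dist hconv
    simpa using this
  have hRHS : Filter.Tendsto (fun k => f x + γ * dist (ω (φ (k + 1))) (ω (φ k)))
      Filter.atTop (nhds (f x)) := by
    have := (tendsto_const_nhds (x := f x) (f := Filter.atTop (α := ℕ))).add
      ((tendsto_const_nhds (x := (γ : ℝ))).mul hdist)
    simpa using this
  have hLHS : Filter.Tendsto (fun k => f (ω (φ k))) Filter.atTop (nhds (f ωbar)) := by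
    have hwithin : Filter.Tendsto (fun k => ω (φ k)) Filter.atTop (nhdsWithin ωbar Ω) := by
      rw [tendsto_nhdsWithin_iff]
      exact ⟨hconv, Filter.Eventually.of_forall fun k => hωΩ (φ k)⟩
    exact (hf ωbar hmem).tendsto.comp hwithin
  exact le_of_tendsto_of_tendsto' hLHS hRHS key
end

section
/- Under the same setting as the greedy subspace minimization procedure (monotone lower envelopes λ_J^{(k)} ≤ λ_J interpolating λ_J at the iterates ω^{(k)}, with iterates ω^{(k+1)} ∈ argmin_Ω λ_J^{(k)}, all functions uniformly Lipschitz on a compact Ω), the sequence of reduced minimal values λ_J^{(k)}(ω^{(k+1)}) is monotonically increasing, bounded above by min_{ω∈Ω} λ_J(ω), and converges to min_{ω∈Ω} λ_J(ω). -/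
open Matrix

/-- in the greedy subspace minimization procedure, the reduced minimal
values `g k (ω (k+1))` form a monotonically increasing sequence bounded above by the
global minimum of `f` over `Ω`, and converge to that global minimum. -/
theorem stmt10 (d : ℕ) (Ω : Set (EuclideanSpace ℝ (Fin d))) (hΩc : IsCompact Ω)
    (f : EuclideanSpace ℝ (Fin d) → ℝ) (hf : ContinuousOn f Ω)
    (g : ℕ → EuclideanSpace ℝ (Fin d) → ℝ)
    (γ : NNReal) (hLip : ∀ k, LipschitzOnWith γ (g k) Ω)
    (hmono : ∀ k p, k ≤ p → ∀ ω ∈ Ω, g k ω ≤ g p ω)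
    (hub : ∀ k, ∀ ω ∈ Ω, g k ω ≤ f ω)
    (ω : ℕ → EuclideanSpace ℝ (Fin d)) (hωΩ : ∀ k, ω k ∈ Ω)
    (hinterp : ∀ k l, l ≤ k → g k (ω l) = f (ω l))
    (hargmin : ∀ k, ∀ x ∈ Ω, g k (ω (k + 1)) ≤ g k x) :
    Monotone (fun k => g k (ω (k + 1))) ∧
    (∀ k, g k (ω (k + 1)) ≤ sInf (f '' Ω)) ∧
    Filter.Tendsto (fun k => g k (ω (k + 1))) Filter.atTop (nhds (sInf (f '' Ω))) := by

  set a : ℕ → ℝ := fun k => g k (ω (k + 1)) with ha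
  have hmonoA : Monotone a := by
    apply monotone_nat_of_le_succ
    intro k
    calc a k ≤ g k (ω (k + 2)) := hargmin k _ (hωΩ _)
      _ ≤ g (k + 1) (ω (k + 2)) := hmono k (k+1) (by omega) _ (hωΩ _)
  have hne : (f '' Ω).Nonempty := ⟨f (ω 0), ω 0, hωΩ 0, rfl⟩
  have hbd : ∀ k, a k ≤ sInf (f '' Ω) := by
    intro k
    apply le_csInf hne
    rintro y ⟨x, hx, rfl⟩
    exact le_trans (hargmin k x hx) (hub k x hx)
  refine ⟨hmonoA, hbd, ?_⟩
  have hba : BddAbove (Set.range a) := ⟨sInf (f '' Ω), by rintro y ⟨k, rfl⟩; exact hbd k⟩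
  have hS : Filter.Tendsto a Filter.atTop (nhds (⨆ k, a k)) :=
    tendsto_atTop_ciSup hmonoA hba
  have hSle : (⨆ k, a k) ≤ sInf (f '' Ω) := ciSup_le hbd
  have hak : ∀ k, a k ≤ ⨆ j, a j := fun k => le_ciSup hba k
  -- reverse inequality
  have hrev : sInf (f '' Ω) ≤ ⨆ k, a k := by
    apply le_of_forall_pos_le_add
    intro ε hε
    obtain ⟨w, hwΩ, φ, hφ, hconv⟩ := hΩc.tendsto_subseq hωΩ
    have hδ : (0:ℝ) < ε / (γ + 1) := by positivity
    rw [Metric.tendsto_atTop] at hconv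
    obtain ⟨N, hN⟩ := hconv (ε / (γ + 1) / 2) (by positivity)
    set l := φ N
    set m := φ (N + 1)
    have hlm : l < m := hφ (by omega)
    have hdist : dist (ω l) (ω m) < ε / (γ + 1) := by
      calc dist (ω l) (ω m) ≤ dist (ω l) w + dist (ω m) w := dist_triangle_right _ _ _
        _ < ε / (γ + 1) / 2 + ε / (γ + 1) / 2 :=
          add_lt_add (hN N le_rfl) (hN (N+1) (by omega))
        _ = ε / (γ + 1) := by ring
    have hm1 : m - 1 + 1 = m := by omega
    have h1 : sInf (f '' Ω) ≤ f (ω l) := csInf_le (hΩc.bddBelow_image hf) ⟨ω l, hωΩ l, rfl⟩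
    have h2 : f (ω l) = g (m - 1) (ω l) := (hinterp (m-1) l (by omega)).symm
    have h3 : g (m - 1) (ω l) ≤ g (m - 1) (ω m) + γ * dist (ω l) (ω m) := by
      have h := (hLip (m - 1)).dist_le_mul (ω l) (hωΩ l) (ω m) (hωΩ m)
      rw [Real.dist_eq] at h
      have := le_trans (le_abs_self _) h
      linarith
    have h4 : g (m - 1) (ω m) = a (m - 1) := by rw [ha]; simp [hm1]
    have h5 : (γ : ℝ) * dist (ω l) (ω m) ≤ ε := by
      calc (γ : ℝ) * dist (ω l) (ω m) ≤ (γ + 1) * (ε / (γ + 1)) := by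
            apply mul_le_mul (by simp) hdist.le dist_nonneg (by positivity)
        _ = ε := by field_simp
    calc sInf (f '' Ω) ≤ g (m - 1) (ω l) := h2 ▸ h1
      _ ≤ a (m - 1) + γ * dist (ω l) (ω m) := h4 ▸ h3
      _ ≤ (⨆ k, a k) + ε := add_le_add (hak _) h5
  have : (⨆ k, a k) = sInf (f '' Ω) := le_antisymm hSle hrev
  exact this ▸ hS
end

section
/- Let B be a p×q complex matrix with singular value decomposition data: σ₁ ≥ ... ≥ σ_J its J largest singular values with consistent left singular vectors u₁,...,u_J and right singular vectors v₁,...,v_J (B v_j = σ_j u_j and B* u_j = σ_j v_j). Let U be a p×m matrix and V a q×m matrix, each with orthonormal columns, whose column spans contain u₁,...,u_J and v₁,...,v_J respectively. Then σ_J(U* B V) = σ_J(B). -/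
open Matrix

set_option linter.dupNamespace false

namespace AuxSVD

/-- squared norm via dot product -/
noncomputable def nsq {n : ℕ} (x : Fin n → ℂ) : ℝ := (star x ⬝ᵥ x).re

lemma nsq_eq_sum {n : ℕ} (x : Fin n → ℂ) : nsq x = ∑ i, Complex.normSq (x i) := by
  simp [nsq, dotProduct, Complex.normSq_apply, Complex.re_sum]

lemma nsq_nonneg {n : ℕ} (x : Fin n → ℂ) : 0 ≤ nsq x := by
  rw [nsq_eq_sum]; exact Finset.sum_nonneg fun i _ => Complex.normSq_nonneg _

lemma nsq_pos {n : ℕ} {x : Fin n → ℂ} (hx : x ≠ 0) : 0 < nsq x := by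
  rw [nsq_eq_sum]
  obtain ⟨i, hi⟩ : ∃ i, x i ≠ 0 := by
    by_contra h; push_neg at h; exact hx (funext h)
  exact Finset.sum_pos' (fun j _ => Complex.normSq_nonneg _)
    ⟨i, Finset.mem_univ i, Complex.normSq_pos.mpr hi⟩

lemma adj_dot {a b : ℕ} (M : Matrix (Fin a) (Fin b) ℂ) (x : Fin b → ℂ) (y : Fin a → ℂ) :
    star (M *ᵥ x) ⬝ᵥ y = star x ⬝ᵥ (Mᴴ *ᵥ y) := by
  rw [star_mulVec, dotProduct_mulVec]

lemma star_sum_dot {n r : ℕ} (a : Fin r → ℂ) (w : Fin r → Fin n → ℂ) (z : Fin n → ℂ) :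
    star (∑ i, a i • w i) ⬝ᵥ z = ∑ i, star (a i) * (star (w i) ⬝ᵥ z) := by
  simp only [dotProduct, Pi.star_apply, Finset.sum_apply, Pi.smul_apply, smul_eq_mul,
    star_sum, star_mul', Finset.mul_sum, Finset.sum_mul]
  rw [Finset.sum_comm]
  exact Finset.sum_congr rfl fun i _ => Finset.sum_congr rfl fun x _ => by ring

lemma dot_sum {n r : ℕ} (z : Fin n → ℂ) (b : Fin r → ℂ) (w : Fin r → Fin n → ℂ) :
    star z ⬝ᵥ (∑ j, b j • w j) = ∑ j, b j * (star z ⬝ᵥ w j) := by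
  simp only [dotProduct, Pi.star_apply, Finset.sum_apply, Pi.smul_apply, smul_eq_mul,
    Finset.mul_sum]
  rw [Finset.sum_comm]
  exact Finset.sum_congr rfl fun i _ => Finset.sum_congr rfl fun x _ => by ring

lemma dot_combo {n r : ℕ} {w : Fin r → Fin n → ℂ}
    (horth : ∀ i j, star (w i) ⬝ᵥ w j = if i = j then 1 else 0)
    (a b : Fin r → ℂ) :
    star (∑ i, a i • w i) ⬝ᵥ (∑ j, b j • w j) = ∑ i, star (a i) * b i := by
  rw [star_sum_dot]
  refine Finset.sum_congr rfl fun i _ => ?_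
  rw [dot_sum]
  simp [horth, Finset.sum_ite_eq', mul_comm]

lemma mulVec_combo {n r : ℕ} {A : Matrix (Fin n) (Fin n) ℂ} {w : Fin r → Fin n → ℂ}
    {μ : Fin r → ℝ} (heig : ∀ i, A *ᵥ w i = (μ i : ℂ) • w i) (a : Fin r → ℂ) :
    A *ᵥ (∑ i, a i • w i) = ∑ i, ((μ i : ℂ) * a i) • w i := by
  have h1 : A *ᵥ (∑ i, a i • w i) = ∑ i, a i • (A *ᵥ w i) := by
    simp only [← Matrix.mulVecLin_apply, map_sum, _root_.map_smul]
  rw [h1]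
  exact Finset.sum_congr rfl fun i _ => by rw [heig i, smul_smul, mul_comm]

lemma quad_eq {n r : ℕ} {A : Matrix (Fin n) (Fin n) ℂ} {w : Fin r → Fin n → ℂ}
    {μ : Fin r → ℝ}
    (horth : ∀ i j, star (w i) ⬝ᵥ w j = if i = j then 1 else 0)
    (heig : ∀ i, A *ᵥ w i = (μ i : ℂ) • w i) (a : Fin r → ℂ) :
    (star (∑ i, a i • w i) ⬝ᵥ (A *ᵥ (∑ i, a i • w i))).re
      = ∑ i, μ i * Complex.normSq (a i) := by
  rw [mulVec_combo heig, dot_combo horth]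
  have : ∀ i : Fin r, star (a i) * ((μ i : ℂ) * a i)
      = ((μ i * Complex.normSq (a i) : ℝ) : ℂ) := by
    intro i
    rw [Complex.ofReal_mul, Complex.normSq_eq_conj_mul_self]
    simp [Complex.star_def]; ring
  simp only [this, Complex.re_sum]
  simp [Complex.ofReal_re]

lemma nsq_combo {n r : ℕ} {w : Fin r → Fin n → ℂ}
    (horth : ∀ i j, star (w i) ⬝ᵥ w j = if i = j then 1 else 0) (a : Fin r → ℂ) :
    nsq (∑ i, a i • w i) = ∑ i, Complex.normSq (a i) := by
  rw [nsq, dot_combo horth]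
  have : ∀ i : Fin r, star (a i) * a i = ((Complex.normSq (a i) : ℝ) : ℂ) := by
    intro i; rw [Complex.normSq_eq_conj_mul_self]; simp [Complex.star_def]
  simp only [this, Complex.re_sum]
  simp [Complex.ofReal_re]

lemma linIndep {n r : ℕ} {w : Fin r → Fin n → ℂ}
    (horth : ∀ i j, star (w i) ⬝ᵥ w j = if i = j then 1 else 0) :
    LinearIndependent ℂ w := by
  rw [Fintype.linearIndependent_iff]
  intro g hg i
  have := congrArg (fun z => star (w i) ⬝ᵥ z) hg
  simpa [dot_sum, horth, Finset.sum_ite_eq'] using this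



lemma eig_basis {n : ℕ} {A : Matrix (Fin n) (Fin n) ℂ} (hA : A.IsHermitian) :
    ∃ (f : Fin n → Fin n → ℂ) (μ : Fin n → ℝ),
      (∀ k l, star (f k) ⬝ᵥ f l = if k = l then 1 else 0) ∧
      (∀ k, A *ᵥ f k = ((μ k : ℂ)) • f k) ∧ Monotone μ ∧
      (∀ J : Fin n, eigLarge hA J = μ J.rev) ∧
      (∀ x : Fin n → ℂ, x = ∑ k, (star (f k) ⬝ᵥ x) • f k) := by
  classical
  set s := Tuple.sort hA.eigenvalues with hs
  refine ⟨fun k => ⇑(hA.eigenvectorBasis (s k)), fun k => hA.eigenvalues (s k), ?_, ?_, ?_, ?_, ?_⟩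
  · intro k l
    have h := orthonormal_iff_ite.mp hA.eigenvectorBasis.orthonormal (s k) (s l)
    rw [EuclideanSpace.inner_eq_star_dotProduct, dotProduct_comm] at h
    simpa [EquivLike.apply_eq_iff_eq] using h
  · intro k
    have h := hA.mulVec_eigenvectorBasis (s k)
    rw [h]
    funext i
    simp [Complex.real_smul]
  · exact Tuple.monotone_sort hA.eigenvalues
  · intro J; rfl
  · intro x
    have h := hA.eigenvectorBasis.sum_repr' (WithLp.toLp 2 x)
    have h2 : ∑ k, (inner ℂ (hA.eigenvectorBasis (s k)) (WithLp.toLp 2 x) : ℂ)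
         • hA.eigenvectorBasis (s k) = WithLp.toLp 2 x :=
      (Equiv.sum_comp s (fun i => (inner ℂ (hA.eigenvectorBasis i)
        (WithLp.toLp 2 x) : ℂ) • hA.eigenvectorBasis i)).trans h
    have h3 := congrArg WithLp.ofLp h2
    simp only [WithLp.ofLp_sum, WithLp.ofLp_smul, EuclideanSpace.inner_eq_star_dotProduct] at h3
    exact h3.symm.trans (Finset.sum_congr rfl fun k _ => by rw [dotProduct_comm])



lemma eigLarge_antitone {n : ℕ} {A : Matrix (Fin n) (Fin n) ℂ} (hA : A.IsHermitian)
    {i J : Fin n} (h : i ≤ J) : eigLarge hA J ≤ eigLarge hA i := by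
  unfold eigLarge
  exact Tuple.monotone_sort hA.eigenvalues (Fin.rev_le_rev.mpr h)

/-- Courant-Fischer style lower bound: a `J+1`-dimensional subspace on which the
Rayleigh quotient is at least `t` forces the `J`-th largest eigenvalue to be at least `t`. -/
lemma core {n J : ℕ} (hJ : J < n) {A : Matrix (Fin n) (Fin n) ℂ} (hA : A.IsHermitian)
    (t : ℝ) (W : Submodule ℂ (Fin n → ℂ)) (hW : J + 1 ≤ Module.finrank ℂ W)
    (hray : ∀ x ∈ W, t * nsq x ≤ (star x ⬝ᵥ (A *ᵥ x)).re) :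
    t ≤ eigLarge hA ⟨J, hJ⟩ := by
  classical
  obtain ⟨f, μ, horth, heig, hmono, hrev, hcompl⟩ := eig_basis hA
  -- the linear map extracting the top-J coordinates
  let φ : (Fin n → ℂ) →ₗ[ℂ] (Fin J → ℂ) :=
    { toFun := fun x j => star (f ⟨n - J + j, by omega⟩) ⬝ᵥ x
      map_add' := by intro x y; funext j; simp [dotProduct_add]
      map_smul' := by intro c x; funext j; simp [dotProduct_smul] }
  have hker : LinearMap.ker (φ.comp W.subtype) ≠ ⊥ := by
    apply LinearMap.ker_ne_bot_of_finrank_lt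
    simpa using lt_of_lt_of_le (Nat.lt_succ_self J) hW
  obtain ⟨⟨x, hxW⟩, hxker, hxne⟩ := Submodule.exists_mem_ne_zero_of_ne_bot hker
  have hx0 : x ≠ 0 := fun h => hxne (Subtype.ext h)
  have hφ : ∀ j : Fin J, star (f ⟨n - J + j, by omega⟩) ⬝ᵥ x = 0 := by
    intro j
    have := congrFun (LinearMap.mem_ker.mp hxker) j
    exact this
  set a : Fin n → ℂ := fun k => star (f k) ⬝ᵥ x with ha
  have hzero : ∀ k : Fin n, n - J ≤ (k : ℕ) → a k = 0 := by
    intro k hk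
    have hkJ : (k : ℕ) - (n - J) < J := by omega
    have := hφ ⟨(k : ℕ) - (n - J), hkJ⟩
    have hkk : (⟨n - J + ((k : ℕ) - (n - J)), by omega⟩ : Fin n) = k := by
      apply Fin.ext; simp; omega
    rwa [hkk] at this
  have hxrep : x = ∑ k, a k • f k := hcompl x
  have hq : (star x ⬝ᵥ (A *ᵥ x)).re = ∑ k, μ k * Complex.normSq (a k) := by
    rw [hxrep]; exact quad_eq horth heig a
  have hn : nsq x = ∑ k, Complex.normSq (a k) := by
    rw [hxrep]; exact nsq_combo horth a
  set lam : ℝ := μ ⟨n - 1 - J, by omega⟩ with hlam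
  have hbound : (star x ⬝ᵥ (A *ᵥ x)).re ≤ lam * nsq x := by
    rw [hq, hn, Finset.mul_sum]
    apply Finset.sum_le_sum
    intro k _
    by_cases hk : (k : ℕ) ≤ n - 1 - J
    · have : μ k ≤ lam := hmono (by exact hk)
      exact mul_le_mul_of_nonneg_right this (Complex.normSq_nonneg _)
    · rw [hzero k (by omega)]
      simp
  have hrayx := hray x hxW
  have hlamJ : eigLarge hA ⟨J, hJ⟩ = lam := by
    rw [hrev ⟨J, hJ⟩, hlam]
    congr 1
    apply Fin.ext
    simp [Fin.rev]
    omega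
  rw [hlamJ]
  have hpos : 0 < nsq x := nsq_pos hx0
  nlinarith [le_trans hrayx hbound]



/-- if there are `J+1` orthonormal eigenvectors with eigenvalues at least `t`,
then the `J`-th largest eigenvalue is at least `t`. -/
lemma lower_of_eigenvectors {n J : ℕ} (hJ : J < n) {A : Matrix (Fin n) (Fin n) ℂ}
    (hA : A.IsHermitian) (t : ℝ) (w : Fin (J + 1) → Fin n → ℂ) (μ : Fin (J + 1) → ℝ)
    (horth : ∀ i j, star (w i) ⬝ᵥ w j = if i = j then 1 else 0)
    (heig : ∀ i, A *ᵥ w i = (μ i : ℂ) • w i)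
    (hμ : ∀ i, t ≤ μ i) :
    t ≤ eigLarge hA ⟨J, hJ⟩ := by
  classical
  apply core hJ hA t (Submodule.span ℂ (Set.range w))
  · rw [finrank_span_eq_card (linIndep horth)]
    simp
  · intro x hx
    obtain ⟨a, rfl⟩ := Submodule.mem_span_range_iff_exists_fun ℂ |>.mp hx
    rw [quad_eq horth heig a, nsq_combo horth a, Finset.mul_sum]
    apply Finset.sum_le_sum
    intro i _
    exact mul_le_mul_of_nonneg_right (hμ i) (Complex.normSq_nonneg _)

/-- existence of `J+1` orthonormal eigenvectors achieving the top `J+1` eigenvalues. -/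
lemma top_eigenvectors {n J : ℕ} (hJ : J < n) {A : Matrix (Fin n) (Fin n) ℂ}
    (hA : A.IsHermitian) :
    ∃ (w : Fin (J + 1) → Fin n → ℂ) (μ : Fin (J + 1) → ℝ),
      (∀ i j, star (w i) ⬝ᵥ w j = if i = j then 1 else 0) ∧
      (∀ i, A *ᵥ w i = (μ i : ℂ) • w i) ∧
      (∀ i, eigLarge hA ⟨J, hJ⟩ ≤ μ i) := by
  classical
  obtain ⟨f, μ, horth, heig, hmono, hrev, hcompl⟩ := eig_basis hA
  have hidx : ∀ i : Fin (J + 1), n - 1 - J + (i : ℕ) < n := by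
    intro i; have := i.isLt; omega
  refine ⟨fun i => f ⟨n - 1 - J + i, hidx i⟩, fun i => μ ⟨n - 1 - J + i, hidx i⟩, ?_, ?_, ?_⟩
  · intro i j
    rw [horth]
    congr 1
    simp only [eq_iff_iff]
    constructor
    · intro h
      apply Fin.ext
      have := congrArg Fin.val h
      simpa using this
    · intro h; rw [h]
  · intro i; exact heig _
  · intro i
    have h1 : eigLarge hA ⟨J, hJ⟩ = μ ⟨n - 1 - J, by omega⟩ := by
      rw [hrev ⟨J, hJ⟩]
      congr 1
      apply Fin.ext
      simp [Fin.rev]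
      omega
    rw [h1]
    exact hmono (by simp)

/-- compression by a coisometry does not increase the squared norm -/
lemma nsq_conjTranspose_mulVec_le {p m : ℕ} (U : Matrix (Fin p) (Fin m) ℂ)
    (hU : Uᴴ * U = 1) (z : Fin p → ℂ) :
    nsq (Uᴴ *ᵥ z) ≤ nsq z := by
  have hUc : ∀ c : Fin m → ℂ, Uᴴ *ᵥ (U *ᵥ c) = c := by
    intro c; rw [mulVec_mulVec, hU, one_mulVec]
  set d : Fin p → ℂ := z - U *ᵥ (Uᴴ *ᵥ z) with hd
  set c : ℂ := star (Uᴴ *ᵥ z) ⬝ᵥ (Uᴴ *ᵥ z) with hc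
  have h1 : star (U *ᵥ (Uᴴ *ᵥ z)) ⬝ᵥ z = c := by
    rw [adj_dot]
  have h2 : star (U *ᵥ (Uᴴ *ᵥ z)) ⬝ᵥ (U *ᵥ (Uᴴ *ᵥ z)) = c := by
    rw [adj_dot, hUc]
  have h3 : star z ⬝ᵥ (U *ᵥ (Uᴴ *ᵥ z)) = star c := by
    rw [← h1]
    exact star_dotProduct z (U *ᵥ (Uᴴ *ᵥ z))
  have hdd : star d ⬝ᵥ d = star z ⬝ᵥ z - star c := by
    rw [hd]
    simp only [star_sub, sub_dotProduct, dotProduct_sub, h1, h2, h3]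
    ring
  have h4 : nsq d = nsq z - nsq (Uᴴ *ᵥ z) := by
    rw [nsq, hdd, Complex.sub_re, Complex.star_def, Complex.conj_re]
    rfl
  have := nsq_nonneg d
  linarith


lemma mulVec_sum_smul {a b r : ℕ} (M : Matrix (Fin a) (Fin b) ℂ) (c : Fin r → ℂ)
    (v : Fin r → Fin b → ℂ) :
    M *ᵥ (∑ i, c i • v i) = ∑ i, c i • (M *ᵥ v i) := by
  simp only [← Matrix.mulVecLin_apply, map_sum, _root_.map_smul]

open scoped ComplexOrder in
lemma eigL_nonneg {p q : ℕ} (B : Matrix (Fin p) (Fin q) ℂ) (i : Fin q) :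
    0 ≤ eigLarge (Matrix.isHermitian_conjTranspose_mul_self B) i :=
  (posSemidef_conjTranspose_mul_self B).eigenvalues_nonneg _

end AuxSVD


open AuxSVD
/-- singular value interpolation: if the column spans of `U` and `V`
contain consistent orthonormal left/right singular vectors for the `J+1` largest
singular values of `B` (0-indexed `J`), then `σ_J(Uᴴ B V) = σ_J(B)`. -/
theorem stmt15 (p q m J : ℕ) (hJm : J < m) (hJq : J < q)
    (B : Matrix (Fin p) (Fin q) ℂ)
    (u : Fin q → (Fin p → ℂ)) (v : Fin q → (Fin q → ℂ))
    (horthou : ∀ i j : Fin q, (i : ℕ) ≤ J → (j : ℕ) ≤ J →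
      star (u i) ⬝ᵥ u j = if i = j then 1 else 0)
    (horthov : ∀ i j : Fin q, (i : ℕ) ≤ J → (j : ℕ) ≤ J →
      star (v i) ⬝ᵥ v j = if i = j then 1 else 0)
    (hsv₁ : ∀ i : Fin q, (i : ℕ) ≤ J → B *ᵥ v i = (svalLarge B i : ℂ) • u i)
    (hsv₂ : ∀ i : Fin q, (i : ℕ) ≤ J → Bᴴ *ᵥ u i = (svalLarge B i : ℂ) • v i)
    (U : Matrix (Fin p) (Fin m) ℂ) (V : Matrix (Fin q) (Fin m) ℂ)
    (hU : Uᴴ * U = 1) (hV : Vᴴ * V = 1)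
    (hspanU : ∀ i : Fin q, (i : ℕ) ≤ J → ∃ c : Fin m → ℂ, u i = U *ᵥ c)
    (hspanV : ∀ i : Fin q, (i : ℕ) ≤ J → ∃ c : Fin m → ℂ, v i = V *ᵥ c) :
    svalLarge (Uᴴ * B * V) ⟨J, hJm⟩ = svalLarge B ⟨J, hJq⟩ := by
  classical
  set M : Matrix (Fin m) (Fin m) ℂ := Uᴴ * B * V with hM
  suffices h : eigLarge (isHermitian_conjTranspose_mul_self M) ⟨J, hJm⟩
      = eigLarge (isHermitian_conjTranspose_mul_self B) ⟨J, hJq⟩ by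
    unfold svalLarge
    rw [h]
  have hnnB : ∀ i : Fin q, 0 ≤ eigLarge (isHermitian_conjTranspose_mul_self B) i := eigL_nonneg B
  have hσsq : ∀ i : Fin q, svalLarge B i ^ 2 = eigLarge (isHermitian_conjTranspose_mul_self B) i :=
    fun i => Real.sq_sqrt (hnnB i)
  have hVc : ∀ c : Fin m → ℂ, Vᴴ *ᵥ (V *ᵥ c) = c := fun c => by
    rw [mulVec_mulVec, hV, one_mulVec]
  have hUc : ∀ c : Fin m → ℂ, Uᴴ *ᵥ (U *ᵥ c) = c := fun c => by
    rw [mulVec_mulVec, hU, one_mulVec]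
  have hVv : ∀ i : Fin q, (i : ℕ) ≤ J → V *ᵥ (Vᴴ *ᵥ v i) = v i := by
    intro i hi; obtain ⟨c, hc⟩ := hspanV i hi; rw [hc, hVc]
  have hUu : ∀ i : Fin q, (i : ℕ) ≤ J → U *ᵥ (Uᴴ *ᵥ u i) = u i := by
    intro i hi; obtain ⟨c, hc⟩ := hspanU i hi; rw [hc, hUc]
  have hMH : Mᴴ = Vᴴ * Bᴴ * U := by
    rw [hM, conjTranspose_mul, conjTranspose_mul, conjTranspose_conjTranspose, Matrix.mul_assoc]
  -- direction 1 : λ_J(BᴴB) ≤ λ_J(MᴴM)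
  have dir1 : eigLarge (isHermitian_conjTranspose_mul_self B) ⟨J, hJq⟩
      ≤ eigLarge (isHermitian_conjTranspose_mul_self M) ⟨J, hJm⟩ := by
    set em : Fin (J + 1) → Fin q := fun i => ⟨i, lt_of_le_of_lt (Nat.lt_succ_iff.mp i.isLt) hJq⟩
      with hem
    have hemJ : ∀ i : Fin (J + 1), ((em i : Fin q) : ℕ) ≤ J := fun i =>
      Nat.lt_succ_iff.mp i.isLt
    apply lower_of_eigenvectors hJm (isHermitian_conjTranspose_mul_self M) _
      (fun i => Vᴴ *ᵥ v (em i)) (fun i => svalLarge B (em i) ^ 2)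
    · intro i j
      have h1 : star (Vᴴ *ᵥ v (em i)) ⬝ᵥ (Vᴴ *ᵥ v (em j))
          = star (v (em i)) ⬝ᵥ (V *ᵥ (Vᴴ *ᵥ v (em j))) := by
        rw [adj_dot, conjTranspose_conjTranspose]
      rw [h1, hVv _ (hemJ j), horthov _ _ (hemJ i) (hemJ j)]
      congr 1
      simp only [eq_iff_iff]
      constructor
      · intro h
        have := congrArg Fin.val h
        exact Fin.ext (by simpa [hem] using this)
      · intro h; rw [h]
    · intro i
      set i' : Fin q := em i
      have hi' : (i' : ℕ) ≤ J := hemJ i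
      have e1 : M *ᵥ (Vᴴ *ᵥ v i') = (svalLarge B i' : ℂ) • (Uᴴ *ᵥ u i') := by
        have : M *ᵥ (Vᴴ *ᵥ v i') = Uᴴ *ᵥ (B *ᵥ (V *ᵥ (Vᴴ *ᵥ v i'))) := by
          simp only [hM, ← mulVec_mulVec]
        rw [this, hVv _ hi', hsv₁ _ hi', mulVec_smul]
      have e2 : Mᴴ *ᵥ ((svalLarge B i' : ℂ) • (Uᴴ *ᵥ u i'))
          = ((svalLarge B i' ^ 2 : ℝ) : ℂ) • (Vᴴ *ᵥ v i') := by
        rw [mulVec_smul]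
        have : Mᴴ *ᵥ (Uᴴ *ᵥ u i') = Vᴴ *ᵥ (Bᴴ *ᵥ (U *ᵥ (Uᴴ *ᵥ u i'))) := by
          simp only [hMH, ← mulVec_mulVec]
        rw [this, hUu _ hi', hsv₂ _ hi', mulVec_smul, smul_smul]
        push_cast
        rw [sq]
      calc (Mᴴ * M) *ᵥ (Vᴴ *ᵥ v i') = Mᴴ *ᵥ (M *ᵥ (Vᴴ *ᵥ v i')) := (mulVec_mulVec _ _ _).symm
        _ = ((svalLarge B i' ^ 2 : ℝ) : ℂ) • (Vᴴ *ᵥ v i') := by rw [e1, e2]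
    · intro i
      rw [hσsq (em i)]
      exact eigLarge_antitone _ (by simpa [hem] using hemJ i)
  -- direction 2 : λ_J(MᴴM) ≤ λ_J(BᴴB)
  have dir2 : eigLarge (isHermitian_conjTranspose_mul_self M) ⟨J, hJm⟩
      ≤ eigLarge (isHermitian_conjTranspose_mul_self B) ⟨J, hJq⟩ := by
    obtain ⟨w, μ, horthw, heigw, hμw⟩ :=
      top_eigenvectors hJm (isHermitian_conjTranspose_mul_self M)
    have horthx : ∀ i j, star (V *ᵥ w i) ⬝ᵥ (V *ᵥ w j) = if i = j then 1 else 0 := by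
      intro i j
      rw [adj_dot, hVc, horthw]
    apply core hJq (isHermitian_conjTranspose_mul_self B) _
      (Submodule.span ℂ (Set.range (fun i => V *ᵥ w i)))
    · rw [finrank_span_eq_card (linIndep horthx)]
      simp
    · intro x hx
      obtain ⟨a, rfl⟩ := (Submodule.mem_span_range_iff_exists_fun ℂ).mp hx
      set y : Fin m → ℂ := ∑ i, a i • w i with hy
      have hxy : (∑ i, a i • (V *ᵥ w i)) = V *ᵥ y := (mulVec_sum_smul V a w).symm
      have key1 : (star (∑ i, a i • (V *ᵥ w i)) ⬝ᵥ
          ((Bᴴ * B) *ᵥ (∑ i, a i • (V *ᵥ w i)))).re = nsq (B *ᵥ (V *ᵥ y)) := by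
        rw [hxy, nsq, ← mulVec_mulVec, ← adj_dot B]
      have key2 : Uᴴ *ᵥ (B *ᵥ (V *ᵥ y)) = M *ᵥ y := by
        simp only [hM, ← mulVec_mulVec]
      have key3 : nsq (M *ᵥ y) = ∑ i, μ i * Complex.normSq (a i) := by
        have : nsq (M *ᵥ y) = (star y ⬝ᵥ ((Mᴴ * M) *ᵥ y)).re := by
          rw [nsq, adj_dot, mulVec_mulVec]
        rw [this, hy]
        exact quad_eq horthw heigw a
      have key4 : nsq (∑ i, a i • (V *ᵥ w i)) = ∑ i, Complex.normSq (a i) :=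
        nsq_combo horthx a
      rw [key1, key4]
      calc eigLarge (isHermitian_conjTranspose_mul_self M) ⟨J, hJm⟩ * ∑ i, Complex.normSq (a i)
          = ∑ i, eigLarge (isHermitian_conjTranspose_mul_self M) ⟨J, hJm⟩
            * Complex.normSq (a i) := Finset.mul_sum _ _ _
        _ ≤ ∑ i, μ i * Complex.normSq (a i) := by
            apply Finset.sum_le_sum
            intro i _
            exact mul_le_mul_of_nonneg_right (hμw i) (Complex.normSq_nonneg _)
        _ = nsq (M *ᵥ y) := key3.symm
        _ = nsq (Uᴴ *ᵥ (B *ᵥ (V *ᵥ y))) := by rw [key2]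
        _ ≤ nsq (B *ᵥ (V *ᵥ y)) := nsq_conjTranspose_mulVec_le U hU _
  exact le_antisymm dir2 dir1
end
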